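/- arXiv:1806.09489 — 12 statements merged into one kernel-verified Lean document; each statement's English description precedes it below -/
import Mathlib

section
/- Let q be a prime power and let k be a field containing the finite field F_q. Then the vanishing ideal of the affine space A^n(F_q) equals Γ_q(k); that is, a polynomial f ∈ k[X_1, …, X_n] vanishes at every point of F_q^n if and only if f belongs to the ideal generated by X_1^q − X_1, …, X_n^q − X_n. -/
open MvPolynomial

private lemma finSuccEquiv_symm_C' {k : Type*} [CommSemiring k] {n : ℕ}
    (c : MvPolynomial (Fin n) k) :
    (MvPolynomial.finSuccEquiv k n).symm (Polynomial.C c) = rename Fin.succ c := by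
  apply (MvPolynomial.finSuccEquiv k n).injective
  rw [AlgEquiv.apply_symm_apply]
  induction c using MvPolynomial.induction_on with
  | C a => simp [MvPolynomial.finSuccEquiv_apply]
  | add p q hp hq => simp [hp, hq]
  | mul_X p i hp => simp [hp, MvPolynomial.finSuccEquiv_X_succ]

private lemma key_lemma (q : ℕ) (hq2 : 2 ≤ q) {k : Type*} [Field k] (S : Finset k)
    (hScard : S.card = q) (hpow : ∀ a ∈ S, a ^ q = a) :
    ∀ (n : ℕ) (f : MvPolynomial (Fin n) k),
      (∀ a : Fin n → k, (∀ i, a i ∈ S) → eval a f = 0) →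
      f ∈ Ideal.span (Set.range fun i : Fin n => (X i : MvPolynomial (Fin n) k) ^ q - X i) := by
  intro n
  induction n with
  | zero =>
    intro f hf
    obtain ⟨c, rfl⟩ := MvPolynomial.C_surjective (Fin 0) f
    have := hf Fin.elim0 (fun i => i.elim0)
    simp only [eval_C] at this
    simp [this]
  | succ n IH =>
    intro f hf
    set F := MvPolynomial.finSuccEquiv k n f with hFdef
    set d : Polynomial (MvPolynomial (Fin n) k) := Polynomial.X ^ q - Polynomial.X with hddef
    have hd : d.Monic := by
      apply Polynomial.monic_X_pow_sub
      simpa using (by exact_mod_cast lt_of_lt_of_le one_lt_two hq2 :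
        (1 : WithBot ℕ) < (q : WithBot ℕ))
    have hdeg_d : d.degree = q := by
      rw [hddef, Polynomial.degree_sub_eq_left_of_degree_lt, Polynomial.degree_X_pow]
      simpa using (by exact_mod_cast lt_of_lt_of_le one_lt_two hq2 :
        (1 : WithBot ℕ) < (q : WithBot ℕ))
    set r := F %ₘ d with hrdef
    have hsplit : F = d * (F /ₘ d) + r := by
      rw [hrdef, add_comm]; exact (Polynomial.modByMonic_add_div F d).symm
    -- translation of symm
    have hsymmX : (MvPolynomial.finSuccEquiv k n).symm Polynomial.X
        = (X 0 : MvPolynomial (Fin (n+1)) k) := by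
      apply (MvPolynomial.finSuccEquiv k n).injective
      rw [AlgEquiv.apply_symm_apply, MvPolynomial.finSuccEquiv_X_zero]
    have hsymmd : (MvPolynomial.finSuccEquiv k n).symm d
        = (X 0 : MvPolynomial (Fin (n+1)) k) ^ q - X 0 := by
      rw [hddef, map_sub, map_pow, hsymmX]
    -- coefficients of r vanish
    have hrdeg : r.natDegree < q := by
      by_cases hr0 : r = 0
      · rw [hr0]; simpa using lt_of_lt_of_le two_pos hq2
      · have := Polynomial.degree_modByMonic_lt F hd
        rw [hdeg_d] at this
        exact (Polynomial.natDegree_lt_iff_degree_lt hr0).mpr this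
    have hcoeff : ∀ j, (∀ a : Fin n → k, (∀ i, a i ∈ S) → eval a (r.coeff j) = 0) := by
      intro j a ha
      -- consider p = r.map (eval a)
      set p : Polynomial k := r.map (eval a) with hpdef
      have hp0 : p = 0 := by
        apply Polynomial.eq_zero_of_natDegree_lt_card_of_eval_eq_zero' p S
        · intro a0 ha0
          have hev := hf (Fin.cons a0 a) (fun i => Fin.cases ha0 ha i)
          rw [MvPolynomial.eval_eq_eval_mv_eval'] at hev
          rw [← hFdef, hsplit, Polynomial.map_add, Polynomial.map_mul] at hev
          have hd0 : Polynomial.eval a0 (d.map (eval a)) = 0 := by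
            simp [hddef, hpow a0 ha0]
          rw [Polynomial.eval_add, Polynomial.eval_mul, hd0, zero_mul, zero_add] at hev
          exact hev
        · calc p.natDegree ≤ r.natDegree := Polynomial.natDegree_map_le
            _ < q := hrdeg
            _ = S.card := hScard.symm
      have : p.coeff j = 0 := by rw [hp0]; simp
      rwa [hpdef, Polynomial.coeff_map] at this
    -- each coefficient is in the span over Fin n
    have hmem : ∀ j, rename Fin.succ (r.coeff j) ∈
        Ideal.span (Set.range fun i : Fin (n+1) => (X i : MvPolynomial (Fin (n+1)) k) ^ q - X i) := by
      intro j
      have h1 := IH (r.coeff j) (hcoeff j)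
      have h2 := Ideal.mem_map_of_mem ((MvPolynomial.rename (Fin.succ : Fin n → Fin (n+1))).toRingHom) h1
      rw [Ideal.map_span] at h2
      refine Ideal.span_mono ?_ h2
      rintro x ⟨y, ⟨i, rfl⟩, rfl⟩
      exact ⟨i.succ, by simp [MvPolynomial.rename_X]⟩
    -- assemble
    have hfr : f = (MvPolynomial.finSuccEquiv k n).symm d *
        (MvPolynomial.finSuccEquiv k n).symm (F /ₘ d) +
        (MvPolynomial.finSuccEquiv k n).symm r := by
      rw [← map_mul, ← map_add, ← hsplit, hFdef, AlgEquiv.symm_apply_apply]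
    rw [hfr]
    apply Ideal.add_mem
    · rw [hsymmd]
      exact Ideal.mul_mem_right _ _ (Ideal.subset_span ⟨0, rfl⟩)
    · -- symm r = sum over support
      have : (MvPolynomial.finSuccEquiv k n).symm r =
          ∑ j ∈ r.support, rename Fin.succ (r.coeff j) * (X 0 : MvPolynomial (Fin (n+1)) k) ^ j := by
        conv_lhs => rw [r.as_sum_support_C_mul_X_pow]
        rw [map_sum]
        refine Finset.sum_congr rfl fun j _ => ?_
        rw [map_mul, map_pow, finSuccEquiv_symm_C', hsymmX]
      rw [this]
      exact Ideal.sum_mem _ fun j _ => Ideal.mul_mem_right _ _ (hmem j)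

/-- The vanishing ideal of `A^n(F_q)` equals `Γ_q(k)`: a polynomial
`f ∈ k[X_1,…,X_n]` vanishes at every point of `F_q^n` if and only if it lies in
the ideal generated by `X_1^q - X_1, …, X_n^q - X_n`. -/
theorem vanishingIdeal_affineSpace_eq_gamma
    (q n : ℕ) (hq : IsPrimePow q) (k : Type*) [Field k]
    (Fq : Subfield k) (hcard : Nat.card Fq = q)
    (f : MvPolynomial (Fin n) k) :
    (∀ a : Fin n → Fq, MvPolynomial.eval (fun i => (a i : k)) f = 0) ↔
      f ∈ Ideal.span
        (Set.range fun i : Fin n => (X i : MvPolynomial (Fin n) k) ^ q - X i) := by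
  classical
  have hfin : Finite Fq := Nat.finite_of_card_ne_zero (by rw [hcard]; exact hq.pos.ne')
  have : Fintype Fq := Fintype.ofFinite _
  have hcard' : Fintype.card Fq = q := by rw [← Nat.card_eq_fintype_card, hcard]
  have hpowFq : ∀ x : Fq, x ^ q = x := by
    intro x; rw [← hcard']; exact FiniteField.pow_card x
  constructor
  · intro hf
    set S : Finset k := Finset.univ.image (fun x : Fq => (x : k)) with hSdef
    have hScard : S.card = q := by
      rw [hSdef, Finset.card_image_of_injective _ Subtype.val_injective, Finset.card_univ, hcard']
    have hpow : ∀ a ∈ S, a ^ q = a := by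
      rintro a ha
      rw [hSdef, Finset.mem_image] at ha
      obtain ⟨x, -, rfl⟩ := ha
      exact_mod_cast congrArg (Subtype.val) (hpowFq x)
    apply key_lemma q hq.two_le S hScard hpow n f
    intro a ha
    choose b hb using fun i => Finset.mem_image.mp (ha i)
    have : a = fun i => ((b i : Fq) : k) := funext fun i => ((hb i).2).symm
    rw [this]
    exact hf b
  · intro hf a
    refine Submodule.span_induction ?_ ?_ ?_ ?_ hf
    · rintro x ⟨i, rfl⟩
      have : ((a i : k)) ^ q = (a i : k) := by exact_mod_cast congrArg Subtype.val (hpowFq (a i))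
      simp [this]
    · simp
    · intro x y _ _ hx hy; simp [hx, hy]
    · intro c x _ hx
      rw [smul_eq_mul, map_mul, hx, mul_zero]
end

section
/- Let q be a prime power and let k be a field containing the finite field F_q. Let I be an ideal of k[X_1, …, X_n] generated by finitely many polynomials with coefficients in F_q, and let Z(F_q) = {a ∈ F_q^n : f(a) = 0 for all f ∈ I} be its set of F_q-rational zeros. Then the vanishing ideal of Z(F_q) in k[X_1, …, X_n] equals I + Γ_q(k); that is, a polynomial f ∈ k[X_1, …, X_n] vanishes at every point of Z(F_q) if and only if f ∈ I + Γ_q(k). -/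
open MvPolynomial

section Aux

variable {k : Type*} [Field k] {Fq : Subfield k} {q n : ℕ}

lemma coe_pow_card_eq [Fintype Fq] (hcard : Fintype.card Fq = q) (x : Fq) :
    (x : k) ^ q = (x : k) := by
  have := FiniteField.pow_card x
  rw [hcard] at this
  calc ((x : k)) ^ q = ((x ^ q : Fq) : k) := by push_cast; ring
  _ = (x : k) := by rw [this]

lemma gamma_le_ker [Fintype Fq] (hcard : Fintype.card Fq = q) (a : Fin n → Fq) :
    Ideal.span (Set.range fun i : Fin n => (X i : MvPolynomial (Fin n) k) ^ q - X i)
      ≤ RingHom.ker (eval fun i => (a i : k)) := by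
  rw [Ideal.span_le]
  rintro _ ⟨i, rfl⟩
  simp [RingHom.mem_ker, coe_pow_card_eq hcard (a i)]

noncomputable def deltaPoly (q : ℕ) {k : Type*} [Field k] (Fq : Subfield k) {n : ℕ}
    (a : Fin n → Fq) : MvPolynomial (Fin n) k :=
  ∏ i, (1 - (X i - C (a i : k)) ^ (q - 1))

open Classical in
lemma eval_deltaPoly [Fintype Fq] (hcard : Fintype.card Fq = q) (hq : 2 ≤ q)
    (a b : Fin n → Fq) :
    eval (fun i => (b i : k)) (deltaPoly q Fq a) = if b = a then 1 else 0 := by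
  rw [deltaPoly, eval_prod]
  by_cases hba : b = a
  · subst hba
    rw [if_pos rfl]
    apply Finset.prod_eq_one
    intro i _
    simp [zero_pow (by omega : q - 1 ≠ 0)]
  · rw [if_neg hba]
    obtain ⟨i, hi⟩ : ∃ i, b i ≠ a i := by
      by_contra h; push_neg at h; exact hba (funext h)
    apply Finset.prod_eq_zero (Finset.mem_univ i)
    have hne : b i - a i ≠ 0 := sub_ne_zero.mpr hi
    have h1 : ((b i : k) - (a i : k)) ^ (q - 1) = 1 := by
      have := FiniteField.pow_card_sub_one_eq_one (b i - a i) hne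
      rw [hcard] at this
      calc ((b i : k) - (a i : k)) ^ (q - 1) = (((b i - a i) ^ (q - 1) : Fq) : k) := by
            push_cast; ring
      _ = 1 := by rw [this]; norm_num
    simp [h1]

/-- Key kernel lemma: polynomials vanishing on all `Fq`-points lie in `Γ_q(k)`. -/
lemma mem_gamma_of_eval_eq_zero [Fintype Fq] (hcard : Fintype.card Fq = q) (hq : 2 ≤ q)
    (f : MvPolynomial (Fin n) k)
    (hf : ∀ a : Fin n → Fq, eval (fun i => (a i : k)) f = 0) :
    f ∈ Ideal.span (Set.range fun i : Fin n => (X i : MvPolynomial (Fin n) k) ^ q - X i) := by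
  set Γ : Ideal (MvPolynomial (Fin n) k) :=
    Ideal.span (Set.range fun i : Fin n => (X i : MvPolynomial (Fin n) k) ^ q - X i) with hΓ
  -- reduced monomials
  set m : (Fin n → Fin q) → MvPolynomial (Fin n) k :=
    fun d => ∏ i, X i ^ (d i : ℕ) with hm
  set W : Submodule k (MvPolynomial (Fin n) k) :=
    Submodule.restrictScalars k (Γ : Submodule (MvPolynomial (Fin n) k) (MvPolynomial (Fin n) k))
      ⊔ Submodule.span k (Set.range m) with hW
  -- every monomial is in W
  have hred : ∀ d : Fin n →₀ ℕ, (∀ i, d i < q) → monomial d (1 : k) ∈ W := by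
    intro d hd
    have : monomial d (1 : k) = m (fun i => ⟨d i, hd i⟩) := by
      show _ = ∏ i : Fin n, (X i : MvPolynomial (Fin n) k) ^ (d i)
      rw [← prod_X_pow_eq_monomial]
      exact Finset.prod_subset (Finset.subset_univ _)
        (fun i _ hi => by rw [Finsupp.notMem_support_iff.mp hi, pow_zero])
    rw [this]
    exact Submodule.mem_sup_right (Submodule.subset_span ⟨_, rfl⟩)
  have key : ∀ N (d : Fin n →₀ ℕ), (∑ j, d j) < N → monomial d (1 : k) ∈ W := by
    intro N
    induction N with
    | zero => intro d hd; omega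
    | succ N ih =>
      intro d hd
      by_cases hcase : ∀ i, d i < q
      · exact hred d hcase
      · push_neg at hcase
        obtain ⟨i, hi⟩ := hcase
        have h1 : d - Finsupp.single i q + Finsupp.single i q = d := by
          ext j
          simp only [Finsupp.add_apply, Finsupp.tsub_apply, Finsupp.single_apply]
          split_ifs with h
          · subst h; omega
          · omega
        have h2 : d - Finsupp.single i q + Finsupp.single i 1 = d - Finsupp.single i (q - 1) := by
          ext j
          simp only [Finsupp.add_apply, Finsupp.tsub_apply, Finsupp.single_apply]
          split_ifs with h
          · subst h; omega
          · omega
        have h3 : monomial (d - Finsupp.single i q) (1 : k) * ((X i) ^ q - X i)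
            = monomial d 1 - monomial (d - Finsupp.single i (q - 1)) 1 := by
          rw [mul_sub, X_pow_eq_monomial, monomial_mul, mul_one,
            show (X i : MvPolynomial (Fin n) k) = X i ^ 1 from (pow_one _).symm,
            X_pow_eq_monomial, monomial_mul, mul_one, h1, h2]
        have h4 : monomial d (1 : k)
            = monomial (d - Finsupp.single i (q - 1)) 1
              + monomial (d - Finsupp.single i q) (1 : k) * ((X i) ^ q - X i) := by
          rw [h3]; ring
        rw [h4]
        apply W.add_mem
        · apply ih
          have hle : ∀ j, (d - Finsupp.single i (q - 1)) j ≤ d j := by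
            intro j; simp [Finsupp.tsub_apply]
          have hlt : (d - Finsupp.single i (q - 1)) i < d i := by
            rw [Finsupp.tsub_apply, Finsupp.single_apply, if_pos rfl]
            omega
          have := Finset.sum_lt_sum (fun j _ => hle j) ⟨i, Finset.mem_univ i, hlt⟩
          omega
        · apply Submodule.mem_sup_left
          exact Γ.mul_mem_left _ (Ideal.subset_span ⟨i, rfl⟩)
  have hWtop : ∀ p : MvPolynomial (Fin n) k, p ∈ W := by
    intro p
    induction p using MvPolynomial.induction_on' with
    | add p q hp hq => exact W.add_mem hp hq
    | monomial u a =>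
      have : monomial u a = a • monomial u (1 : k) := by
        rw [smul_monomial, smul_eq_mul, mul_one]
      rw [this]
      exact W.smul_mem a (key (∑ j, u j + 1) u (by omega))
  -- evaluation functions
  set v : (Fin n → Fin q) → ((Fin n → Fq) → k) :=
    fun d a => ∏ i, (a i : k) ^ (d i : ℕ) with hv
  have heval_m : ∀ (d : Fin n → Fin q) (a : Fin n → Fq),
      eval (fun i => (a i : k)) (m d) = v d a := by
    intro d a
    simp [hm, hv, eval_prod]
  -- span of v is everything
  have hvspan : ⊤ ≤ Submodule.span k (Set.range v) := by
    intro g _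
    have hdel : ∀ a : Fin n → Fq,
        (fun b : Fin n → Fq => eval (fun i => (b i : k)) (deltaPoly q Fq a))
          ∈ Submodule.span k (Set.range v) := by
      intro a
      obtain ⟨γ, hγ, s, hs, hgs⟩ := Submodule.mem_sup.mp (hWtop (deltaPoly q Fq a))
      obtain ⟨c, hc⟩ := (Submodule.mem_span_range_iff_exists_fun k).mp hs
      have : (fun b : Fin n → Fq => eval (fun i => (b i : k)) (deltaPoly q Fq a))
          = ∑ d, c d • v d := by
        funext b
        have hγ0 : eval (fun i => (b i : k)) γ = 0 :=
          gamma_le_ker hcard b hγ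
        rw [← hgs]
        simp only [map_add, hγ0, zero_add, ← hc, map_sum, Finset.sum_apply, Pi.smul_apply]
        congr 1
        funext d
        rw [smul_eq_C_mul, map_mul, eval_C, heval_m, smul_eq_mul]
      rw [this]
      exact Submodule.sum_mem _ fun d _ =>
        Submodule.smul_mem _ _ (Submodule.subset_span ⟨d, rfl⟩)
    have hg : g = ∑ a : Fin n → Fq,
        g a • (fun b : Fin n → Fq => eval (fun i => (b i : k)) (deltaPoly q Fq a)) := by
      funext b
      simp only [Finset.sum_apply, Pi.smul_apply, eval_deltaPoly hcard hq, smul_eq_mul, mul_ite,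
        mul_one, mul_zero]
      simp
    rw [hg]
    exact Submodule.sum_mem _ fun a _ => Submodule.smul_mem _ _ (hdel a)
  have hli : LinearIndependent k v := by
    apply linearIndependent_of_top_le_span_of_card_eq_finrank hvspan
    rw [Module.finrank_pi]
    simp [hcard]
  -- finish
  obtain ⟨γ, hγ, s, hs, hgs⟩ := Submodule.mem_sup.mp (hWtop f)
  obtain ⟨c, hc⟩ := (Submodule.mem_span_range_iff_exists_fun k).mp hs
  have hs0 : ∀ a : Fin n → Fq, eval (fun i => (a i : k)) s = 0 := by
    intro a
    have hγ0 : eval (fun i => (a i : k)) γ = 0 := gamma_le_ker hcard a hγ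
    have := hf a
    rw [← hgs, map_add, hγ0, zero_add] at this
    exact this
  have hsum0 : ∑ d, c d • v d = 0 := by
    funext a
    simp only [Finset.sum_apply, Pi.smul_apply, Pi.zero_apply]
    have := hs0 a
    rw [← hc, map_sum] at this
    rw [← this]
    congr 1
    funext d
    rw [smul_eq_C_mul, map_mul, eval_C, heval_m, smul_eq_mul]
  have hc0 : ∀ d, c d = 0 := Fintype.linearIndependent_iff.mp hli c hsum0
  have : s = 0 := by rw [← hc]; simp [hc0]
  rw [← hgs, this, add_zero]
  exact hγ

end Aux

/-- Affine `F_q`-Nullstellensatz -/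
theorem vanishingIdeal_eq_ideal_sup_gamma
    (q n r : ℕ) (hq : IsPrimePow q) (k : Type*) [Field k]
    (Fq : Subfield k) (hcard : Nat.card Fq = q)
    (F : Fin r → MvPolynomial (Fin n) Fq)
    (I : Ideal (MvPolynomial (Fin n) k))
    (hI : I = Ideal.span (Set.range fun j => MvPolynomial.map Fq.subtype (F j)))
    (f : MvPolynomial (Fin n) k) :
    (∀ a : Fin n → Fq,
        (∀ p ∈ I, MvPolynomial.eval (fun i => (a i : k)) p = 0) →
        MvPolynomial.eval (fun i => (a i : k)) f = 0) ↔
      f ∈ I ⊔ Ideal.span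
        (Set.range fun i : Fin n => (X i : MvPolynomial (Fin n) k) ^ q - X i) := by
  classical
  have hq2 : 2 ≤ q := hq.two_le
  have hfin : Finite Fq := Nat.finite_of_card_ne_zero (by omega)
  haveI : Fintype Fq := Fintype.ofFinite Fq
  have hcard' : Fintype.card Fq = q := by rw [← Nat.card_eq_fintype_card]; exact hcard
  set Γ : Ideal (MvPolynomial (Fin n) k) :=
    Ideal.span (Set.range fun i : Fin n => (X i : MvPolynomial (Fin n) k) ^ q - X i) with hΓ
  constructor
  · intro hvanish
    -- forward direction
    have hΓJ : Γ ≤ I ⊔ Γ := le_sup_right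
    have hdelta_mem : ∀ a : Fin n → Fq,
        (¬ ∀ p ∈ I, eval (fun i => (a i : k)) p = 0) → deltaPoly q Fq a ∈ I ⊔ Γ := by
      intro a ha
      -- some generator doesn't vanish at a
      have : ∃ j, eval (fun i => (a i : k)) (MvPolynomial.map Fq.subtype (F j)) ≠ 0 := by
        by_contra hall
        push_neg at hall
        apply ha
        intro p hp
        have : I ≤ RingHom.ker (eval fun i => (a i : k)) := by
          rw [hI, Ideal.span_le]
          rintro _ ⟨j, rfl⟩
          exact hall j
        exact this hp
      obtain ⟨j, hj⟩ := this
      set g := MvPolynomial.map Fq.subtype (F j) with hg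
      set c := eval (fun i => (a i : k)) g with hcdef
      have hgI : g ∈ I := by rw [hI]; exact Ideal.subset_span ⟨j, rfl⟩
      have hker : deltaPoly q Fq a * g - C c * deltaPoly q Fq a ∈ Γ := by
        apply mem_gamma_of_eval_eq_zero hcard' hq2
        intro b
        rw [map_sub, map_mul, map_mul, eval_C, eval_deltaPoly hcard' hq2]
        by_cases hba : b = a
        · subst hba; simp [hcdef]
        · simp [if_neg hba]
      have hmem : C c * deltaPoly q Fq a ∈ I ⊔ Γ := by
        have h1 : deltaPoly q Fq a * g ∈ I ⊔ Γ :=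
          le_sup_left (α := Ideal (MvPolynomial (Fin n) k)) (Ideal.mul_mem_left I _ hgI)
        have h2 : deltaPoly q Fq a * g - C c * deltaPoly q Fq a ∈ I ⊔ Γ := hΓJ hker
        have := Ideal.sub_mem _ h1 h2
        simpa using this
      have : C c⁻¹ * (C c * deltaPoly q Fq a) = deltaPoly q Fq a := by
        rw [← mul_assoc, ← C_mul, inv_mul_cancel₀ hj, C_1, one_mul]
      rw [← this]
      exact Ideal.mul_mem_left _ _ hmem
    -- write f as sum of deltas plus Γ element
    set p : MvPolynomial (Fin n) k :=
      ∑ a : Fin n → Fq, C (eval (fun i => (a i : k)) f) * deltaPoly q Fq a with hp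
    have hfp : f - p ∈ Γ := by
      apply mem_gamma_of_eval_eq_zero hcard' hq2
      intro b
      rw [map_sub, hp, map_sum]
      have : ∀ a : Fin n → Fq,
          eval (fun i => (b i : k)) (C (eval (fun i => (a i : k)) f) * deltaPoly q Fq a)
            = if b = a then eval (fun i => (b i : k)) f else 0 := by
        intro a
        rw [map_mul, eval_C, eval_deltaPoly hcard' hq2]
        split_ifs with h
        · subst h; ring
        · ring
      rw [Finset.sum_congr rfl fun a _ => this a]
      simp
    have hpJ : p ∈ I ⊔ Γ := by
      rw [hp]
      apply Ideal.sum_mem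
      intro a _
      by_cases ha : ∀ p ∈ I, eval (fun i => (a i : k)) p = 0
      · have : eval (fun i => (a i : k)) f = 0 := hvanish a ha
        rw [this, C_0, zero_mul]
        exact Ideal.zero_mem _
      · exact Ideal.mul_mem_left _ _ (hdelta_mem a ha)
    have := Ideal.add_mem _ (hΓJ hfp) hpJ
    simpa using this
  · intro hf a ha
    obtain ⟨p, hpI, g, hgΓ, hpg⟩ := Submodule.mem_sup.mp hf
    rw [← hpg, map_add, ha p hpI, gamma_le_ker hcard' a hgΓ, add_zero]
end

section
/- Let q be a prime power and let f, f_1, …, f_m ∈ F_q[X_1, …, X_n]. If f vanishes at every common zero of f_1, …, f_m in F_q^n, then there exist g_1, …, g_m ∈ F_q[X_1, …, X_n] and γ ∈ Γ_q such that f = g_1 f_1 + ⋯ + g_m f_m + γ, where Γ_q is the ideal of F_q[X_1, …, X_n] generated by X_1^q − X_1, …, X_n^q − X_n. -/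
open MvPolynomial

private lemma mono_reduce (q : ℕ) (hq : 2 ≤ q) {n : ℕ} {Fq : Type*} [CommRing Fq] :
    ∀ (N : ℕ) (d : Fin n →₀ ℕ) (c : Fq), d.sum (fun _ x => x) ≤ N →
    ∃ r : MvPolynomial (Fin n) Fq, r ∈ restrictDegree (Fin n) Fq (q - 1) ∧
      monomial d c - r ∈ Ideal.span
        (Set.range fun i : Fin n => (X i : MvPolynomial (Fin n) Fq) ^ q - X i) := by
  intro N
  induction N with
  | zero =>
    intro d c hd
    have hd0 : d = 0 := by
      ext j
      simp only [Finsupp.coe_zero, Pi.zero_apply]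
      by_cases h : j ∈ d.support
      · have h1 : d j ≤ ∑ x ∈ d.support, d x :=
          Finset.single_le_sum (f := fun x => d x) (fun _ _ => Nat.zero_le _) h
        simp only [Finsupp.sum] at hd
        omega
      · simpa using Finsupp.notMem_support_iff.mp h
    subst hd0
    refine ⟨monomial 0 c, ?_, by simp⟩
    rw [mem_restrictDegree]
    intro s hs i
    classical
    rcases eq_or_ne c 0 with rfl | hc
    · simp at hs
    · rw [support_monomial, if_neg hc] at hs
      simp only [Finset.mem_singleton] at hs
      subst hs; simp
  | succ N ih =>
    intro d c hd
    by_cases hbig : ∀ i, d i ≤ q - 1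
    · refine ⟨monomial d c, ?_, by simp⟩
      rw [mem_restrictDegree]
      intro s hs i
      classical
      rcases eq_or_ne c 0 with rfl | hc
      · simp at hs
      · rw [support_monomial, if_neg hc] at hs
        simp only [Finset.mem_singleton] at hs
        subst hs; exact hbig i
    · push_neg at hbig
      obtain ⟨i, hi⟩ := hbig
      have hqi : q ≤ d i := by omega
      classical
      set d' : Fin n →₀ ℕ := d - Finsupp.single i (q - 1) with hd'
      set b : Fin n →₀ ℕ := d - Finsupp.single i q with hb
      have hbd : b + Finsupp.single i q = d := by
        ext j
        rcases eq_or_ne j i with rfl | hji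
        · simp [hb, Finsupp.single_apply]; omega
        · simp [hb, Finsupp.single_apply, hji, Ne.symm hji]
      have hbd' : b + Finsupp.single i 1 = d' := by
        ext j
        rcases eq_or_ne j i with rfl | hji
        · simp [hb, hd', Finsupp.single_apply]; omega
        · simp [hb, hd', Finsupp.single_apply, hji, Ne.symm hji]
      have hsum' : d'.sum (fun _ x => x) ≤ N := by
        have hdd : d' + Finsupp.single i (q - 1) = d := by
          ext j
          rcases eq_or_ne j i with rfl | hji
          · simp [hd', Finsupp.single_apply]; omega
          · simp [hd', Finsupp.single_apply, hji, Ne.symm hji]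
        have hsplit : (d' + Finsupp.single i (q - 1)).sum (fun _ x => x)
            = d'.sum (fun _ x => x) + (Finsupp.single i (q - 1)).sum (fun _ x => x) :=
          Finsupp.sum_add_index' (fun _ => rfl) (fun _ _ _ => rfl)
        rw [hdd, Finsupp.sum_single_index rfl] at hsplit
        omega
      obtain ⟨r, hr, hrmem⟩ := ih d' c hsum'
      refine ⟨r, hr, ?_⟩
      have key : monomial d c - monomial d' c
          = monomial b c * ((X i : MvPolynomial (Fin n) Fq) ^ q - X i) := by
        rw [mul_sub, X_pow_eq_monomial, X, monomial_mul, monomial_mul, mul_one, hbd, hbd']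
      have h1 : monomial d c - monomial d' c ∈ Ideal.span
          (Set.range fun i : Fin n => (X i : MvPolynomial (Fin n) Fq) ^ q - X i) := by
        rw [key]
        exact Ideal.mul_mem_left _ _ (Ideal.subset_span ⟨i, rfl⟩)
      have : monomial d c - r = (monomial d c - monomial d' c) + (monomial d' c - r) := by ring
      rw [this]
      exact Ideal.add_mem _ h1 hrmem

private lemma poly_reduce (q : ℕ) (hq : 2 ≤ q) {n : ℕ} {Fq : Type*} [CommRing Fq]
    (p : MvPolynomial (Fin n) Fq) :
    ∃ r : MvPolynomial (Fin n) Fq, r ∈ restrictDegree (Fin n) Fq (q - 1) ∧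
      p - r ∈ Ideal.span
        (Set.range fun i : Fin n => (X i : MvPolynomial (Fin n) Fq) ^ q - X i) := by
  induction p using MvPolynomial.induction_on' with
  | monomial d c => exact mono_reduce q hq _ d c le_rfl
  | add p1 p2 ih1 ih2 =>
      obtain ⟨r1, hr1, hm1⟩ := ih1
      obtain ⟨r2, hr2, hm2⟩ := ih2
      refine ⟨r1 + r2, Submodule.add_mem _ hr1 hr2, ?_⟩
      have : p1 + p2 - (r1 + r2) = (p1 - r1) + (p2 - r2) := by ring
      rw [this]
      exact Ideal.add_mem _ hm1 hm2

private lemma eq_zero_of_eval_eq_zero' {n : ℕ} {K : Type u} [Fintype K] [Field K]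
    (p : MvPolynomial (Fin n) K) (h : ∀ v : Fin n → K, eval v p = 0)
    (hp : p ∈ restrictDegree (Fin n) K (Fintype.card K - 1)) : p = 0 := by
  classical
  let e : Fin n ≃ ULift.{u} (Fin n) := Equiv.ulift.symm
  have h2 : rename e p = 0 := by
    apply MvPolynomial.eq_zero_of_eval_eq_zero
    · intro v
      rw [eval_rename]
      exact h _
    · rw [mem_restrictDegree] at hp ⊢
      intro s hs i
      rw [support_rename_of_injective e.injective] at hs
      obtain ⟨t, ht, rfl⟩ := Finset.mem_image.mp hs
      have hie : i = e (e.symm i) := (e.apply_symm_apply i).symm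
      rw [hie, Finsupp.mapDomain_apply e.injective]
      exact hp t ht _
  exact rename_injective e e.injective (by simpa using h2)

/-- If `f ∈ F_q[X_1,…,X_n]` vanishes at every common zero in `F_q^n` of
`f_1, …, f_m ∈ F_q[X_1,…,X_n]`, then `f = g_1 f_1 + ⋯ + g_m f_m + γ` for some
`g_1, …, g_m ∈ F_q[X_1,…,X_n]` and `γ ∈ Γ_q = ⟨X_1^q - X_1, …, X_n^q - X_n⟩`. -/
theorem eq_combination_add_gamma_of_vanishing_on_common_zeros
    (q n m : ℕ) (hq : IsPrimePow q)
    (Fq : Type*) [Field Fq] [Fintype Fq] (hcard : Fintype.card Fq = q)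
    (f : MvPolynomial (Fin n) Fq) (F : Fin m → MvPolynomial (Fin n) Fq)
    (hvan : ∀ a : Fin n → Fq,
      (∀ i : Fin m, MvPolynomial.eval a (F i) = 0) → MvPolynomial.eval a f = 0) :
    ∃ (g : Fin m → MvPolynomial (Fin n) Fq) (γ : MvPolynomial (Fin n) Fq),
      γ ∈ Ideal.span
        (Set.range fun i : Fin n => (X i : MvPolynomial (Fin n) Fq) ^ q - X i) ∧
      f = (∑ i : Fin m, g i * F i) + γ := by
  subst hcard
  have hq2 : 2 ≤ Fintype.card Fq := hq.two_le
  set q := Fintype.card Fq with hqdef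
  set Γ : Ideal (MvPolynomial (Fin n) Fq) :=
    Ideal.span (Set.range fun i : Fin n => (X i : MvPolynomial (Fin n) Fq) ^ q - X i) with hΓ
  set P : MvPolynomial (Fin n) Fq := ∏ i : Fin m, (1 - F i ^ (q - 1)) with hP
  -- every point kills Γ
  have hΓ0 : ∀ (a : Fin n → Fq), ∀ γ ∈ Γ, eval a γ = 0 := by
    intro a γ hγ
    have : Γ ≤ RingHom.ker (eval a) := by
      rw [hΓ, Ideal.span_le]
      rintro _ ⟨i, rfl⟩
      simp only [SetLike.mem_coe, RingHom.mem_ker, map_sub, map_pow, eval_X]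
      rw [hqdef, FiniteField.pow_card, sub_self]
    exact this hγ
  -- f * P vanishes everywhere
  have hvP : ∀ a : Fin n → Fq, eval a (f * P) = 0 := by
    intro a
    rw [map_mul]
    by_cases h : ∀ i, eval a (F i) = 0
    · rw [hvan a h, zero_mul]
    · push_neg at h
      obtain ⟨j, hj⟩ := h
      have hPz : eval a P = 0 := by
        rw [hP, map_prod]
        apply Finset.prod_eq_zero (Finset.mem_univ j)
        rw [map_sub, map_one, map_pow,
          FiniteField.pow_card_sub_one_eq_one (eval a (F j)) hj, sub_self]
      rw [hPz, mul_zero]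
  -- f * P ∈ Γ
  have hfP : f * P ∈ Γ := by
    obtain ⟨r, hr, hmem⟩ := poly_reduce q hq2 (f * P)
    have hr0 : r = 0 := by
      apply eq_zero_of_eval_eq_zero' r _ hr
      intro v
      have := hΓ0 v _ hmem
      rw [map_sub, hvP v, zero_sub, neg_eq_zero] at this
      exact this
    rw [hr0, sub_zero] at hmem
    exact hmem
  -- 1 - P ∈ span of the F i
  have h1P : (1 - P) ∈ Ideal.span (Set.range F) := by
    rw [hP]
    have : ∀ s : Finset (Fin m),
        (1 - ∏ i ∈ s, (1 - F i ^ (q - 1))) ∈ Ideal.span (Set.range F) := by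
      intro s
      induction s using Finset.induction with
      | empty => simp
      | insert a s hnot ih =>
        rw [Finset.prod_insert hnot]
        have key : 1 - (1 - F a ^ (q - 1)) * ∏ i ∈ s, (1 - F i ^ (q - 1))
            = (1 - ∏ i ∈ s, (1 - F i ^ (q - 1)))
              + F a ^ (q - 1) * ∏ i ∈ s, (1 - F i ^ (q - 1)) := by ring
        rw [key]
        refine Ideal.add_mem _ ih ?_
        have ha : F a ∈ Ideal.span (Set.range F) := Ideal.subset_span ⟨a, rfl⟩
        have : F a ^ (q - 1) ∈ Ideal.span (Set.range F) := by
          have : F a ^ (q - 1) = F a ^ (q - 2) * F a := by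
            rw [← pow_succ]
            congr 1
            omega
          rw [this]
          exact Ideal.mul_mem_left _ _ ha
        exact Ideal.mul_mem_right _ _ this
    exact this Finset.univ
  have hf1P : f * (1 - P) ∈ Ideal.span (Set.range F) := Ideal.mul_mem_left _ _ h1P
  obtain ⟨g, hg⟩ := Ideal.mem_span_range_iff_exists_fun.mp hf1P
  refine ⟨g, f * P, hfP, ?_⟩
  rw [hg]
  ring
end

section
/- Let q be a prime power and let k be a field containing the finite field F_q. For any ideal I of k[X_1, …, X_n] generated by finitely many polynomials with coefficients in F_q, the ideal I + Γ_q(k) is a radical ideal of k[X_1, …, X_n]. -/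
set_option synthInstance.maxHeartbeats 1000000
set_option maxHeartbeats 1000000

open MvPolynomial

namespace GammaRadAux

variable {n : ℕ} {k : Type*} [Field k] (Fq : Subfield k)

/-- Apply an `Fq`-linear functional to each coefficient. -/
noncomputable def lam (l : k →ₗ[Fq] Fq) (f : MvPolynomial (Fin n) k) :
    MvPolynomial (Fin n) Fq :=
  AddMonoidAlgebra.ofCoeff (Finsupp.mapRange l (map_zero l) (AddMonoidAlgebra.coeff f))

lemma coeff_lam (l : k →ₗ[Fq] Fq) (f : MvPolynomial (Fin n) k) (m : Fin n →₀ ℕ) :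
    coeff m (lam Fq l f) = l (coeff m f) := Finsupp.mapRange_apply (hf := map_zero l)

lemma lam_add (l : k →ₗ[Fq] Fq) (f g : MvPolynomial (Fin n) k) :
    lam Fq l (f + g) = lam Fq l f + lam Fq l g := by
  ext m; simp [coeff_lam, coeff_add, map_add]

lemma lam_zero (l : k →ₗ[Fq] Fq) : lam Fq l (0 : MvPolynomial (Fin n) k) = 0 := by
  ext m; simp [coeff_lam]

lemma lam_mul_X (l : k →ₗ[Fq] Fq) (a : MvPolynomial (Fin n) k) (i : Fin n) :
    lam Fq l (a * X i) = lam Fq l a * X i := by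
  classical
  ext m
  rw [coeff_lam, coeff_mul_X', coeff_mul_X']
  split_ifs with h <;> simp [coeff_lam]

lemma lam_C_mul (l : k →ₗ[Fq] Fq) (c : Fq) (a : MvPolynomial (Fin n) k) :
    lam Fq l (C (c : k) * a) = C c * lam Fq l a := by
  ext m
  rw [coeff_lam, coeff_C_mul, coeff_C_mul, coeff_lam]
  have h := map_smul l c (coeff m a)
  rw [smul_eq_mul, Subfield.smul_def, smul_eq_mul] at h
  rw [h]

lemma lam_semilinear (l : k →ₗ[Fq] Fq) (g : MvPolynomial (Fin n) Fq) :
    ∀ a : MvPolynomial (Fin n) k,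
      lam Fq l (MvPolynomial.map Fq.subtype g * a) = g * lam Fq l a := by
  induction g using MvPolynomial.induction_on with
  | C c =>
      intro a
      rw [map_C]
      exact lam_C_mul Fq l c a
  | add p q hp hq =>
      intro a
      rw [map_add, add_mul, lam_add, hp, hq, add_mul]
  | mul_X p i hp =>
      intro a
      have h1 : MvPolynomial.map Fq.subtype (p * X i) * a
          = MvPolynomial.map Fq.subtype p * (a * X i) := by
        rw [map_mul, map_X]; ring
      rw [h1, hp, lam_mul_X]; ring

lemma lam_mem (l : k →ₗ[Fq] Fq) (J0 : Ideal (MvPolynomial (Fin n) Fq))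
    {g : MvPolynomial (Fin n) k}
    (hg : g ∈ Ideal.map (MvPolynomial.map Fq.subtype :
        MvPolynomial (Fin n) Fq →+* MvPolynomial (Fin n) k) J0) :
    lam Fq l g ∈ J0 := by
  have hg' : g ∈ Ideal.span ((MvPolynomial.map Fq.subtype :
      MvPolynomial (Fin n) Fq →+* MvPolynomial (Fin n) k) '' J0) := hg
  have main : ∀ a : MvPolynomial (Fin n) k, lam Fq l (a * g) ∈ J0 := by
    refine Submodule.span_induction
      (p := fun x _ => ∀ a : MvPolynomial (Fin n) k, lam Fq l (a * x) ∈ J0)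
      ?_ ?_ ?_ ?_ hg'
    · rintro _ ⟨g0, hg0, rfl⟩ a
      rw [mul_comm, lam_semilinear]
      exact Ideal.mul_mem_right _ _ hg0
    · intro a; rw [mul_zero, lam_zero]; exact zero_mem _
    · intro x y _ _ ihx ihy a
      rw [mul_add, lam_add]
      exact add_mem (ihx a) (ihy a)
    · intro c x _ ih a
      rw [smul_eq_mul, ← mul_assoc]
      exact ih (a * c)
  simpa using main 1

lemma mem_of_lam (J0 : Ideal (MvPolynomial (Fin n) Fq)) (f : MvPolynomial (Fin n) k)
    (h : ∀ l : k →ₗ[Fq] Fq, lam Fq l f ∈ J0) :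
    f ∈ Ideal.map (MvPolynomial.map Fq.subtype :
        MvPolynomial (Fin n) Fq →+* MvPolynomial (Fin n) k) J0 := by
  classical
  set b := Module.Basis.ofVectorSpace Fq k with hb
  set s : Finset ↑(Module.Basis.ofVectorSpaceIndex Fq k) :=
    f.support.biUnion fun m => (b.repr (coeff m f)).support with hs
  have hf : f = ∑ i ∈ s, C (b i : k) *
      MvPolynomial.map Fq.subtype (lam Fq (b.coord i) f) := by
    ext m
    rw [coeff_sum]
    simp only [coeff_C_mul, coeff_map, coeff_lam, Module.Basis.coord_apply]
    by_cases hc : coeff m f = 0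
    · simp [hc]
    · have hm : m ∈ f.support := mem_support_iff.mpr hc
      have hsub : (b.repr (coeff m f)).support ⊆ s := by
        rw [hs]
        exact Finset.subset_biUnion_of_mem
          (fun m => (b.repr (coeff m f)).support) hm
      have step1 : ∀ i, (b i : k) * (Fq.subtype (b.repr (coeff m f) i))
          = (b.repr (coeff m f) i) • (b i : k) := by
        intro i; rw [Subfield.smul_def, mul_comm]; rfl
      rw [Finset.sum_congr rfl fun i _ => step1 i]
      rw [← Finset.sum_subset hsub (fun i _ hi => by
        rw [Finsupp.notMem_support_iff.mp hi, zero_smul])]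
      have := Module.Basis.linearCombination_repr b (coeff m f)
      rw [Finsupp.linearCombination_apply, Finsupp.sum] at this
      exact this.symm
  rw [hf]
  refine Ideal.sum_mem _ fun i _ => Ideal.mul_mem_left _ _ ?_
  exact Ideal.mem_map_of_mem _ (h (b.coord i))

lemma pow_sub_mem_gamma (p m : ℕ) [Fact p.Prime] [CharP k p] [ExpChar k p]
    (f : MvPolynomial (Fin n) k) :
    f ^ (p ^ m) - MvPolynomial.map (iterateFrobenius k p m) f ∈
      Ideal.span (Set.range fun i : Fin n =>
        (X i : MvPolynomial (Fin n) k) ^ (p ^ m) - X i) := by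
  induction f using MvPolynomial.induction_on with
  | C c =>
      rw [map_C, iterateFrobenius_def, ← C_pow, sub_self]
      exact zero_mem _
  | add f g hf hg =>
      rw [add_pow_char_pow, map_add]
      simpa [add_sub_add_comm] using add_mem hf hg
  | mul_X f i hf =>
      rw [mul_pow, map_mul, map_X]
      have key : f ^ (p ^ m) * (X i : MvPolynomial (Fin n) k) ^ (p ^ m)
          - MvPolynomial.map (iterateFrobenius k p m) f * X i
          = f ^ (p ^ m) * ((X i) ^ (p ^ m) - X i)
            + (f ^ (p ^ m) - MvPolynomial.map (iterateFrobenius k p m) f) * X i := by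
        ring
      rw [key]
      exact add_mem (Ideal.mul_mem_left _ _ (Ideal.subset_span ⟨i, rfl⟩))
        (Ideal.mul_mem_right _ _ hf)

end GammaRadAux

open GammaRadAux

/-- For any ideal `I` of `k[X_1,…,X_n]` generated by finitely many polynomials with
coefficients in `F_q`, the ideal `I + Γ_q(k)` is a radical ideal. -/
theorem ideal_sup_gamma_isRadical
    (q n r : ℕ) (hq : IsPrimePow q) (k : Type*) [Field k]
    (Fq : Subfield k) (hcard : Nat.card Fq = q)
    (F : Fin r → MvPolynomial (Fin n) Fq)
    (I : Ideal (MvPolynomial (Fin n) k))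
    (hI : I = Ideal.span (Set.range fun j => MvPolynomial.map Fq.subtype (F j))) :
    (I ⊔ Ideal.span
      (Set.range fun i : Fin n => (X i : MvPolynomial (Fin n) k) ^ q - X i)).IsRadical := by
  classical
  obtain ⟨p, m, pp, hm, hq'⟩ := hq
  subst hq'
  have pp' : p.Prime := Nat.prime_iff.mpr pp
  haveI : Fact p.Prime := ⟨pp'⟩
  -- Fq is a finite field of cardinality p ^ m
  have hfin : Finite Fq := Nat.finite_of_card_ne_zero (by
    rw [hcard]; exact (pow_pos pp'.pos m).ne')
  haveI : Fintype Fq := Fintype.ofFinite _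
  have hcard' : Fintype.card Fq = p ^ m := by rw [← Nat.card_eq_fintype_card, hcard]
  -- characteristic p
  haveI : CharP Fq (ringChar Fq) := ringChar.charP _
  obtain ⟨n', hn'⟩ := FiniteField.card Fq (ringChar Fq)
  have hrp : ringChar Fq = p := by
    have hd : p ∣ ringChar Fq ^ (n' : ℕ) := by
      rw [← hn'.2, hcard']
      exact dvd_pow_self p hm.ne'
    exact ((Nat.prime_dvd_prime_iff_eq pp' hn'.1).mp (pp'.dvd_of_dvd_pow hd)).symm
  haveI hcFq : CharP Fq p := hrp ▸ ringChar.charP Fq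
  haveI : CharP k p := charP_of_injective_ringHom Fq.subtype.injective p
  haveI : ExpChar k p := ExpChar.prime pp'
  set q := p ^ m with hqdef
  set σ : k →+* k := iterateFrobenius k p m with hσ
  have hfix : ∀ c : Fq, σ ((c : k)) = (c : k) := by
    intro c
    rw [hσ, iterateFrobenius_def]
    have h1 : ((c : k)) ^ (p ^ m) = ((c ^ (p ^ m) : Fq) : k) := by
      push_cast; ring
    have h2 : c ^ (p ^ m) = c := by
      conv_lhs => rw [← hqdef, ← hcard']
      exact FiniteField.pow_card c
    rw [h1, h2]
  set ι := (MvPolynomial.map Fq.subtype :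
      MvPolynomial (Fin n) Fq →+* MvPolynomial (Fin n) k) with hι
  set Γ := Ideal.span (Set.range fun i : Fin n =>
      (X i : MvPolynomial (Fin n) k) ^ q - X i) with hΓ
  set J := I ⊔ Γ with hJdef
  set J0 : Ideal (MvPolynomial (Fin n) Fq) :=
    Ideal.span (Set.range F ∪ Set.range fun i : Fin n =>
      (X i : MvPolynomial (Fin n) Fq) ^ q - X i) with hJ0
  have hJ : J = Ideal.map ι J0 := by
    have h1 : ⇑ι '' Set.range F = Set.range fun j => MvPolynomial.map Fq.subtype (F j) := by
      rw [← Set.range_comp]; rfl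
    have h2 : ⇑ι '' (Set.range fun i : Fin n =>
        (X i : MvPolynomial (Fin n) Fq) ^ q - X i)
        = Set.range fun i : Fin n => (X i : MvPolynomial (Fin n) k) ^ q - X i := by
      rw [← Set.range_comp]
      refine congrArg Set.range (funext fun i => ?_)
      show ι ((X i : MvPolynomial (Fin n) Fq) ^ q - X i) = _
      rw [map_sub, map_pow, MvPolynomial.map_X]
    rw [hJ0, Ideal.map_span, Set.image_union, Ideal.span_union, h1, h2, hJdef, hI, hΓ]
  -- the key step: f ^ q ∈ J → f ∈ J
  have key : ∀ f : MvPolynomial (Fin n) k, f ^ q ∈ J → f ∈ J := by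
    intro f hfq
    -- the Frobenius as an Fq-linear map
    set σL : k →ₗ[Fq] k :=
      { toFun := σ
        map_add' := map_add σ
        map_smul' := by
          intro c x
          simp only [RingHom.id_apply]
          rw [Subfield.smul_def, Subfield.smul_def]
          calc σ ((c : k) * x) = σ (c : k) * σ x := map_mul σ _ _
            _ = (c : k) * σ x := by rw [hfix] } with hσL
    have hσinj : Function.Injective σL := σ.injective
    obtain ⟨W, hW⟩ := Submodule.exists_isCompl (LinearMap.range σL)
    set π := (LinearMap.range σL).linearProjOfIsCompl W hW with hπ
    set e := LinearEquiv.ofInjective σL hσinj with he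
    set ρ : k →ₗ[Fq] k := e.symm.toLinearMap ∘ₗ π with hρdef
    have hρ : ∀ x : k, ρ (σ x) = x := by
      intro x
      have hmem : σ x ∈ LinearMap.range σL := ⟨x, rfl⟩
      have h0 : π (σ x) = ⟨σ x, hmem⟩ :=
        Submodule.linearProjOfIsCompl_apply_left hW ⟨σ x, hmem⟩
      have h1 : e x = ⟨σ x, hmem⟩ := Subtype.ext (LinearEquiv.ofInjective_apply σL x)
      calc ρ (σ x) = e.symm (π (σ x)) := rfl
        _ = e.symm (e x) := by rw [h0, h1]
        _ = x := e.symm_apply_apply x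
    have hcong := pow_sub_mem_gamma p m f
    have hΓle : Γ ≤ J := le_sup_right
    have hΦmem : MvPolynomial.map σ f ∈ J := by
      have h2 : f ^ q - MvPolynomial.map σ f ∈ J := hΓle hcong
      have h3 : MvPolynomial.map σ f = f ^ q - (f ^ q - MvPolynomial.map σ f) := by ring
      rw [h3]
      exact J.sub_mem hfq h2
    rw [hJ] at hΦmem ⊢
    apply mem_of_lam
    intro l
    have h2 := lam_mem Fq (l ∘ₗ ρ) J0 hΦmem
    have h3 : lam Fq (l ∘ₗ ρ) (MvPolynomial.map σ f) = lam Fq l f := by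
      ext m'
      rw [coeff_lam, coeff_lam, coeff_map]
      simp only [LinearMap.comp_apply]
      rw [hρ]
    rwa [h3] at h2
  -- conclude radicality
  intro f hf
  obtain ⟨r0, hr0⟩ := Ideal.mem_radical_iff.mp hf
  have hq2 : 1 < q := Nat.one_lt_pow hm.ne' pp'.one_lt
  have big : f ^ (q ^ r0) ∈ J := by
    have hlt : r0 < q ^ r0 := Nat.lt_pow_self hq2
    have heq : q ^ r0 = r0 + (q ^ r0 - r0) := by omega
    rw [heq, pow_add]
    exact Ideal.mul_mem_right _ _ hr0
  have desc : ∀ t (g : MvPolynomial (Fin n) k), g ^ (q ^ t) ∈ J → g ∈ J := by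
    intro t
    induction t with
    | zero => intro g hg; simpa using hg
    | succ t ih =>
        intro g hg
        refine ih g (key _ ?_)
        rw [← pow_mul, ← pow_succ]
        exact hg
  exact desc r0 f big
end

section
/- Let q be a prime power and let k be a field containing the finite field F_q. Let I be an ideal of k[X_1, …, X_n] generated by finitely many polynomials with coefficients in F_q, and let Z(F_q) = {a ∈ F_q^n : f(a) = 0 for all f ∈ I}. Then the number of points of Z(F_q) is at most the dimension of k[X_1, …, X_n]/(I + Γ_q(k)) as a k-vector space: |Z(F_q)| ≤ dim_k k[X_1, …, X_n]/(I + Γ_q(k)). -/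
open MvPolynomial

lemma aux_quotient_finite {k : Type*} [Field k] {n q : ℕ} (hq : 2 ≤ q)
    (J : Ideal (MvPolynomial (Fin n) k))
    (hJ : ∀ i, (X i : MvPolynomial (Fin n) k) ^ q - X i ∈ J) :
    Module.Finite k (MvPolynomial (Fin n) k ⧸ J) := by
  classical
  set R := MvPolynomial (Fin n) k
  let mk : R →ₗ[k] R ⧸ J := (Ideal.Quotient.mkₐ k J).toLinearMap
  let S : Set (R ⧸ J) :=
    Set.range (fun f : Fin n → Fin q =>
      mk (monomial (Finsupp.equivFunOnFinite.symm fun i => (f i : ℕ)) 1))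
  have key : ∀ N (d : Fin n →₀ ℕ), (d.sum fun _ m => m) = N →
      mk (monomial d 1) ∈ Submodule.span k S := by
    intro N
    induction N using Nat.strong_induction_on with
    | _ N IH =>
      intro d hd
      by_cases hlt : ∀ i, d i < q
      · apply Submodule.subset_span
        refine ⟨fun i => ⟨d i, hlt i⟩, ?_⟩
        have hfd : (Finsupp.equivFunOnFinite.symm fun i =>
            (((fun i => (⟨d i, hlt i⟩ : Fin q)) i : Fin q) : ℕ)) = d := by
          ext i
          simp [Finsupp.equivFunOnFinite]
        exact congrArg (fun t => mk ((monomial t) 1)) hfd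
      · push_neg at hlt
        obtain ⟨i, hi⟩ := hlt
        set e : Fin n →₀ ℕ := d - Finsupp.single i q with he
        have hde : d = e + Finsupp.single i q := by
          ext j
          simp only [he, Finsupp.add_apply, Finsupp.tsub_apply, Finsupp.single_apply]
          by_cases hji : i = j
          · subst hji; simp; omega
          · simp [hji]
        set d'' : Fin n →₀ ℕ := e + Finsupp.single i 1 with hd''
        have hsum : (e.sum fun _ m => m) + q = N := by
          rw [← hd, hde, Finsupp.sum_add_index (by simp) (by simp)]
          simp
        have hsum'' : (d''.sum fun _ m => m) = (e.sum fun _ m => m) + 1 := by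
          rw [hd'', Finsupp.sum_add_index (by simp) (by simp)]
          simp
        have heq : mk (monomial d 1) = mk (monomial d'' 1) := by
          have hmem : monomial d 1 - monomial d'' 1 ∈ J := by
            have hrw : (monomial d 1 : R) - monomial d'' 1
                = monomial e 1 * ((X i : R) ^ q - X i) := by
              rw [hde, hd'', monomial_add_single, monomial_add_single, pow_one, mul_sub]
            rw [hrw]
            exact J.mul_mem_left _ (hJ i)
          show Ideal.Quotient.mkₐ k J _ = Ideal.Quotient.mkₐ k J _
          simpa [Ideal.Quotient.mkₐ_eq_mk] using (Ideal.Quotient.eq (I := J)).2 hmem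
        rw [heq]
        exact IH _ (by omega) d'' hsum''
  have hspan : Submodule.span k S = ⊤ := by
    rw [Submodule.eq_top_iff']
    intro x
    obtain ⟨p, rfl⟩ := Ideal.Quotient.mkₐ_surjective k J x
    rw [show (Ideal.Quotient.mkₐ k J p : R ⧸ J) = mk p from rfl, p.as_sum, map_sum]
    apply Submodule.sum_mem
    intro d _
    have hmono : (monomial d) (coeff d p) = coeff d p • monomial d 1 := by
      rw [smul_monomial, smul_eq_mul, mul_one]
    rw [hmono, map_smul]
    exact Submodule.smul_mem _ _ (key _ d rfl)
  have hfin : S.Finite := Set.finite_range _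
  exact ⟨⟨hfin.toFinset, by rwa [Set.Finite.coe_toFinset]⟩⟩

/-- If `I` is an ideal of `k[X_1,…,X_n]` generated by finitely many polynomials with
coefficients in `F_q`, and `Z(F_q) = {a ∈ F_q^n : p(a) = 0 for all p ∈ I}`, then
`|Z(F_q)| ≤ dim_k k[X_1,…,X_n]/(I + Γ_q(k))`. -/
theorem card_rationalPoints_le_finrank_quotient
    (q n r : ℕ) (hq : IsPrimePow q) (k : Type*) [Field k]
    (Fq : Subfield k) (hcard : Nat.card Fq = q)
    (F : Fin r → MvPolynomial (Fin n) Fq)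
    (I : Ideal (MvPolynomial (Fin n) k))
    (hI : I = Ideal.span (Set.range fun j => MvPolynomial.map Fq.subtype (F j))) :
    Nat.card {a : Fin n → Fq //
        ∀ p ∈ I, MvPolynomial.eval (fun i => (a i : k)) p = 0} ≤
      Module.finrank k
        (MvPolynomial (Fin n) k ⧸
          (I ⊔ Ideal.span
            (Set.range fun i : Fin n => (X i : MvPolynomial (Fin n) k) ^ q - X i))) := by
  classical
  have hq2 : 2 ≤ q := hq.two_le
  have hFqfin : Finite Fq := Nat.finite_of_card_ne_zero (by omega)
  have : Fintype Fq := Fintype.ofFinite _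
  have hcard' : Fintype.card Fq = q := by rw [← Nat.card_eq_fintype_card, hcard]
  set R := MvPolynomial (Fin n) k
  set Γ : Ideal R := Ideal.span
      (Set.range fun i : Fin n => (X i : R) ^ q - X i) with hΓ
  set J : Ideal R := I ⊔ Γ with hJdef
  set Z := {a : Fin n → Fq // ∀ p ∈ I, MvPolynomial.eval (fun i => (a i : k)) p = 0}
  have : Fintype Z := Fintype.ofFinite _
  -- pow facts
  have hpow : ∀ x : Fq, x ^ q = x := by
    intro x; rw [← hcard']; exact FiniteField.pow_card x
  have hpow1 : ∀ x : Fq, x ≠ 0 → x ^ (q - 1) = 1 := by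
    intro x hx; rw [← hcard']; exact FiniteField.pow_card_sub_one_eq_one x hx
  -- evaluation maps kill J
  have hker : ∀ a : Z, ∀ p ∈ J, (aeval (fun i => (a.1 i : k)) : R →ₐ[k] k) p = 0 := by
    intro a p hp
    have hle : J ≤ RingHom.ker (aeval (fun i => (a.1 i : k)) : R →ₐ[k] k).toRingHom := by
      rw [hJdef]
      apply sup_le
      · intro p hp
        rw [RingHom.mem_ker]
        have h0 := a.2 p hp
        show (aeval (fun i => (a.1 i : k)) : R →ₐ[k] k) p = 0
        rw [show (aeval (fun i => (a.1 i : k)) : R →ₐ[k] k) p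
          = eval (fun i => (a.1 i : k)) p from by rw [← coe_aeval_eq_eval]; rfl]
        exact h0
      · rw [hΓ, Ideal.span_le]
        rintro _ ⟨i, rfl⟩
        rw [SetLike.mem_coe, RingHom.mem_ker]
        have hxq : ((a.1 i : k)) ^ q = ((a.1 i : k)) := by
          rw [← SubmonoidClass.coe_pow, hpow]
        show (aeval (fun i => (a.1 i : k)) : R →ₐ[k] k) _ = 0
        simp only [map_sub, map_pow, aeval_X]
        rw [hxq, sub_self]
    exact hle hp
  let E : (R ⧸ J) →ₗ[k] (Z → k) :=
    LinearMap.pi fun a => (Ideal.Quotient.liftₐ J _ (hker a)).toLinearMap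
  -- indicator polynomials
  let e : (Fin n → Fq) → R := fun a => ∏ i, (1 - ((X i : R) - C ((a i : k))) ^ (q - 1))
  have heval : ∀ a b : Fin n → Fq,
      (aeval (fun i => (b i : k)) : R →ₐ[k] k) (e a) = if a = b then 1 else 0 := by
    intro a b
    have hrw : (aeval (fun i => (b i : k)) : R →ₐ[k] k) (e a)
        = ∏ i, (1 - ((b i : k) - (a i : k)) ^ (q - 1)) := by
      simp [e]
    rw [hrw]
    by_cases hab : a = b
    · subst hab
      simp [zero_pow (show q - 1 ≠ 0 by omega)]
    · rw [if_neg hab]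
      obtain ⟨i, hi⟩ := Function.ne_iff.1 hab
      apply Finset.prod_eq_zero (Finset.mem_univ i)
      have h1 : ((b i : k) - (a i : k)) = ((b i - a i : Fq) : k) := by push_cast; ring
      have h2 : (b i - a i : Fq) ≠ 0 := sub_ne_zero.2 (Ne.symm hi)
      rw [h1, ← SubmonoidClass.coe_pow, hpow1 _ h2]
      simp
  -- section
  let s : (Z → k) →ₗ[k] (R ⧸ J) :=
    Fintype.linearCombination k (fun a : Z => Ideal.Quotient.mk J (e a.1))
  have hsec : ∀ c : Z → k, E (s c) = c := by
    intro c
    funext b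
    have hEb : ∀ x : R ⧸ J, E x b = (Ideal.Quotient.liftₐ J _ (hker b)) x := fun _ => rfl
    calc E (s c) b
        = ∑ a : Z, c a • (Ideal.Quotient.liftₐ J _ (hker b))
            (Ideal.Quotient.mk J (e a.1)) := by
          rw [hEb, Fintype.linearCombination_apply, map_sum]
          simp only [map_smul]
      _ = ∑ a : Z, (if a = b then c a else 0) := by
          refine Finset.sum_congr rfl fun a _ => ?_
          change c a • ((aeval (fun i => (b.1 i : k)) : R →ₐ[k] k) : R →+* k) (e a.1) = _
          rw [show ((aeval (fun i => (b.1 i : k)) : R →ₐ[k] k) : R →+* k) (e a.1)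
            = (aeval (fun i => (b.1 i : k)) : R →ₐ[k] k) (e a.1) from rfl, heval]
          by_cases hab : a = b
          · subst hab; simp
          · rw [if_neg (fun h => hab (Subtype.ext h)), if_neg hab, smul_zero]
      _ = c b := by rw [Finset.sum_ite_eq', if_pos (Finset.mem_univ b)]
  have hinj : Function.Injective s := by
    intro c₁ c₂ h
    have := congrArg E h
    rwa [hsec, hsec] at this
  have : Module.Finite k (R ⧸ J) := by
    apply aux_quotient_finite hq2
    intro i
    exact Ideal.mem_sup_right (Ideal.subset_span ⟨i, rfl⟩)
  calc Nat.card Z = Fintype.card Z := Nat.card_eq_fintype_card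
    _ = Module.finrank k (Z → k) := (Module.finrank_pi k).symm
    _ ≤ Module.finrank k (R ⧸ J) := LinearMap.finrank_le_finrank_of_injective hinj
end

section
/- Let q be a prime power, let k be a field containing the finite field F_q, and fix a monomial order ≼ on the monomials of k[X_1, …, X_n]. Let f_1, …, f_r be nonzero polynomials in F_q[X_1, …, X_n] and let Z(F_q) = {a ∈ F_q^n : f_1(a) = ⋯ = f_r(a) = 0}. Then |Z(F_q)| ≤ |Δ̄(f_1, …, f_r)|, where Δ̄(f_1, …, f_r) is the set of monomials μ such that μ is reduced (each variable occurring in μ has exponent at most q−1) and μ is divisible by none of the leading monomials in_≼(f_1), …, in_≼(f_r). -/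
open MvPolynomial

set_option maxHeartbeats 1600000 in
set_option synthInstance.maxHeartbeats 400000 in
/-- Affine `F_q`-footprint bound: given a monomial order `le` on the monomials of
`k[X_1,…,X_n]` (identified with `Fin n →₀ ℕ`), a leading-monomial function `lm` for it,
and nonzero polynomials `f_1,…,f_r ∈ F_q[X_1,…,X_n]`, the number of common zeros of
`f_1,…,f_r` in `F_q^n` is at most the number of reduced monomials divisible by none of
the leading monomials `lm f_1, …, lm f_r` (divisibility of monomials being the pointwise
order `≤` on exponent vectors). -/
theorem card_commonZeros_le_card_footprint
    (q n r : ℕ) (hq : IsPrimePow q) (k : Type*) [Field k]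
    (Fq : Subfield k) (hcard : Nat.card Fq = q)
    (le : (Fin n →₀ ℕ) → (Fin n →₀ ℕ) → Prop)
    (hrefl : ∀ μ, le μ μ)
    (hantisymm : ∀ μ ν, le μ ν → le ν μ → μ = ν)
    (htrans : ∀ μ ν ξ, le μ ν → le ν ξ → le μ ξ)
    (htotal : ∀ μ ν, le μ ν ∨ le ν μ)
    (hone : ∀ μ, le 0 μ)
    (hmul : ∀ ν μ₁ μ₂, le μ₁ μ₂ → le (ν + μ₁) (ν + μ₂))
    (lm : MvPolynomial (Fin n) Fq → (Fin n →₀ ℕ))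
    (hlm : ∀ f : MvPolynomial (Fin n) Fq, f ≠ 0 →
      lm f ∈ f.support ∧ ∀ ν ∈ f.support, le ν (lm f))
    (F : Fin r → MvPolynomial (Fin n) Fq)
    (hF : ∀ j, F j ≠ 0) :
    Nat.card {a : Fin n → Fq // ∀ j, MvPolynomial.eval a (F j) = 0} ≤
      Nat.card {μ : Fin n →₀ ℕ //
        (∀ i : Fin n, μ i ≤ q - 1) ∧ ∀ j : Fin r, ¬ lm (F j) ≤ μ} := by
  classical
  have hq2 : 2 ≤ q := hq.two_le
  -- finiteness of the field
  haveI hFqfin : Finite Fq := Nat.finite_of_card_ne_zero (by omega)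
  letI : Fintype Fq := Fintype.ofFinite _
  have hqcard : Fintype.card Fq = q := by rw [← Nat.card_eq_fintype_card, hcard]
  -- pointwise order implies the monomial order
  have hpoint : ∀ {μ ν : Fin n →₀ ℕ}, μ ≤ ν → le μ ν := by
    intro μ ν h
    obtain ⟨c, rfl⟩ := le_iff_exists_add.1 h
    have := hmul μ 0 c (hone c)
    simpa using this
  -- well-foundedness of the strict monomial order
  haveI : IsIrrefl (Fin n →₀ ℕ) (fun x y => le x y ∧ x ≠ y) := ⟨fun _ h => h.2 rfl⟩
  haveI : IsTrans (Fin n →₀ ℕ) (fun x y => le x y ∧ x ≠ y) :=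
    ⟨fun a b c h1 h2 => ⟨htrans _ _ _ h1.1 h2.1,
      fun he => h1.2 (hantisymm _ _ h1.1 (he ▸ h2.1))⟩⟩
  haveI : IsStrictOrder (Fin n →₀ ℕ) (fun x y => le x y ∧ x ≠ y) := { }
  have hwf : WellFounded (fun x y : Fin n →₀ ℕ => le x y ∧ x ≠ y) := by
    rw [RelEmbedding.wellFounded_iff_isEmpty]
    constructor
    intro f
    obtain ⟨a, b, hab, hle⟩ := (wellQuasiOrdered_le (α := Fin n →₀ ℕ))
      (fun m => f m)
    have h1 : le (f b) (f a) ∧ (f b : Fin n →₀ ℕ) ≠ f a := f.map_rel_iff.2 hab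
    exact h1.2 (hantisymm _ _ h1.1 (hpoint hle))
  -- the reduction step
  have hstep : ∀ (g p : MvPolynomial (Fin n) Fq) (π : Fin n →₀ ℕ), g ≠ 0 →
      p.coeff π ≠ 0 → (∀ ν ∈ p.support, le ν π) → π ≤ lm g →
      ∃ g' : MvPolynomial (Fin n) Fq,
        (∀ a : Fin n → Fq, eval a p = 0 → eval a g' = eval a g) ∧
        (∀ ν ∈ g'.support, le ν (lm g) ∧ ν ≠ lm g) := by
    intro g p π hg hcπ hsp hπ
    set m : Fin n →₀ ℕ := lm g - π with hm
    set t : MvPolynomial (Fin n) Fq :=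
      p * monomial m (g.coeff (lm g) * (p.coeff π)⁻¹) with ht
    refine ⟨g - t, ?_, ?_⟩
    · intro a hap
      rw [ht, map_sub, map_mul, hap, zero_mul, sub_zero]
    · have hct : t.coeff (lm g) = g.coeff (lm g) := by
        rw [ht, coeff_mul_monomial', if_pos (tsub_le_self : m ≤ lm g)]
        rw [hm, tsub_tsub_cancel_of_le hπ, mul_comm (coeff (lm g) g), ← mul_assoc,
          mul_inv_cancel₀ hcπ, one_mul]
      have hlmg : (g - t).coeff (lm g) = 0 := by
        rw [coeff_sub, hct, sub_self]
      intro ν hν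
      have hνne : ν ≠ lm g := by
        intro he
        rw [MvPolynomial.mem_support_iff, he, hlmg] at hν
        exact hν rfl
      refine ⟨?_, hνne⟩
      have hν' : g.coeff ν ≠ 0 ∨ t.coeff ν ≠ 0 := by
        by_contra hcon
        push_neg at hcon
        rw [MvPolynomial.mem_support_iff, coeff_sub, hcon.1, hcon.2, sub_self] at hν
        exact hν rfl
      rcases hν' with h | h
      · exact (hlm g hg).2 ν (MvPolynomial.mem_support_iff.2 h)
      · rw [ht, coeff_mul_monomial'] at h
        by_cases hmν : m ≤ ν
        · rw [if_pos hmν] at h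
          have h1 : p.coeff (ν - m) ≠ 0 := fun h0 => h (by rw [h0, zero_mul])
          have h2 : le (ν - m) π := hsp _ (MvPolynomial.mem_support_iff.2 h1)
          have := hmul m _ _ h2
          rwa [add_tsub_cancel_of_le hmν, hm, tsub_add_cancel_of_le hπ] at this
        · rw [if_neg hmν] at h; exact absurd rfl h
    -- the field polynomials vanish everywhere
  have hfield : ∀ (i : Fin n) (a : Fin n → Fq),
      eval a ((X i ^ q - X i : MvPolynomial (Fin n) Fq)) = 0 := by
    intro i a
    have : (a i) ^ q = a i := by
      rw [← hqcard]; exact FiniteField.pow_card (a i)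
    simp [map_sub, map_pow, this]
  have hfieldcoeff : ∀ i : Fin n,
      (X i ^ q - X i : MvPolynomial (Fin n) Fq).coeff (Finsupp.single i q) = 1 := by
    intro i
    have hne : Finsupp.single i q ≠ Finsupp.single i 1 := by
      intro h
      have := Finsupp.single_injective i h
      omega
    rw [coeff_sub, X_pow_eq_monomial, coeff_monomial, coeff_X',
      if_pos rfl, if_neg hne.symm, sub_zero]
  have hfieldsupp : ∀ i : Fin n, ∀ ν ∈ (X i ^ q - X i : MvPolynomial (Fin n) Fq).support,
      le ν (Finsupp.single i q) := by
    intro i ν hν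
    rw [MvPolynomial.mem_support_iff, coeff_sub, X_pow_eq_monomial,
      coeff_monomial, coeff_X'] at hν
    by_cases h1 : Finsupp.single i q = ν
    · subst h1; exact hrefl _
    · by_cases h2 : Finsupp.single i 1 = ν
      · subst h2
        exact hpoint (Finsupp.single_le_iff.2 (by simp; omega))
      · rw [if_neg h1, if_neg h2, sub_zero] at hν
        exact absurd rfl hν
  -- main reduction by well-founded induction
  have main : ∀ μ : Fin n →₀ ℕ, ∀ g : MvPolynomial (Fin n) Fq, g ≠ 0 → lm g = μ →
      ∃ h : MvPolynomial (Fin n) Fq,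
        (∀ ν ∈ h.support, (∀ i : Fin n, ν i ≤ q - 1) ∧ ∀ j : Fin r, ¬ lm (F j) ≤ ν) ∧
        ∀ a : Fin n → Fq, (∀ j, eval a (F j) = 0) → eval a g = eval a h := by
    intro μ
    induction μ using WellFounded.induction hwf with
    | _ μ IH =>
    intro g hg hlmg
    by_cases hdiv : ∃ j : Fin r, lm (F j) ≤ lm g
    · obtain ⟨j, hj⟩ := hdiv
      have hcπ : (F j).coeff (lm (F j)) ≠ 0 :=
        MvPolynomial.mem_support_iff.1 (hlm (F j) (hF j)).1
      obtain ⟨g', hev, hsup⟩ := hstep g (F j) (lm (F j)) hg hcπ (hlm (F j) (hF j)).2 hj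
      by_cases hg' : g' = 0
      · refine ⟨0, by simp, fun a ha => ?_⟩
        rw [← hev a (ha j), hg']
      · have hlt : le (lm g') μ ∧ lm g' ≠ μ := by
          rw [← hlmg]; exact hsup _ (hlm g' hg').1
        obtain ⟨h, hh, hag⟩ := IH (lm g') hlt g' hg' rfl
        exact ⟨h, hh, fun a ha => by rw [← hev a (ha j)]; exact hag a ha⟩
    · by_cases hred : ∃ i : Fin n, ¬ (lm g) i ≤ q - 1
      · obtain ⟨i, hi⟩ := hred
        have hπ : Finsupp.single i q ≤ lm g := Finsupp.single_le_iff.2 (by omega)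
        obtain ⟨g', hev, hsup⟩ := hstep g (X i ^ q - X i) (Finsupp.single i q) hg
          (by rw [hfieldcoeff i]; exact one_ne_zero) (hfieldsupp i) hπ
        by_cases hg' : g' = 0
        · refine ⟨0, by simp, fun a _ => ?_⟩
          rw [← hev a (hfield i a), hg']
        · have hlt : le (lm g') μ ∧ lm g' ≠ μ := by
            rw [← hlmg]; exact hsup _ (hlm g' hg').1
          obtain ⟨h, hh, hag⟩ := IH (lm g') hlt g' hg' rfl
          exact ⟨h, hh, fun a ha => by rw [← hev a (hfield i a)]; exact hag a ha⟩
      · -- the leading monomial is in the footprint; strip it off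
        push_neg at hdiv hred
        set c : Fq := g.coeff (lm g) with hc
        set g' : MvPolynomial (Fin n) Fq := g - monomial (lm g) c with hg'def
        have hev0 : ∀ a : Fin n → Fq,
            eval a g = eval a g' + eval a (monomial (lm g) c) := by
          intro a; rw [hg'def, map_sub]; ring
        have hsupp' : ∀ ν ∈ g'.support, ν ∈ g.support ∧ ν ≠ lm g := by
          intro ν hν
          have hne : ν ≠ lm g := by
            intro he
            rw [MvPolynomial.mem_support_iff, he, hg'def, coeff_sub, coeff_monomial,
              if_pos rfl, hc, sub_self] at hν
            exact hν rfl
          have : g'.coeff ν = g.coeff ν := by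
            rw [hg'def, coeff_sub, coeff_monomial, if_neg (Ne.symm hne), sub_zero]
          rw [MvPolynomial.mem_support_iff, this] at hν
          exact ⟨MvPolynomial.mem_support_iff.2 hν, hne⟩
        have hμgood : (∀ i : Fin n, (lm g) i ≤ q - 1) ∧
            ∀ j : Fin r, ¬ lm (F j) ≤ lm g := ⟨hred, hdiv⟩
        by_cases hg'0 : g' = 0
        · refine ⟨monomial (lm g) c, ?_, fun a _ => ?_⟩
          · intro ν hν
            have := MvPolynomial.support_monomial (a := c) (s := lm g) ▸ hν
            by_cases hc0 : c = 0
            · rw [if_pos hc0] at this; simp at this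
            · rw [if_neg hc0] at this
              rw [Finset.mem_singleton] at this
              subst this; exact ⟨hμgood.1, hμgood.2⟩
          · rw [hev0 a, hg'0, map_zero, zero_add]
        · have hlt : le (lm g') μ ∧ lm g' ≠ μ := by
            rw [← hlmg]
            have h1 := hsupp' _ (hlm g' hg'0).1
            exact ⟨(hlm g hg).2 _ h1.1, h1.2⟩
          obtain ⟨h, hh, hag⟩ := IH (lm g') hlt g' hg'0 rfl
          refine ⟨h + monomial (lm g) c, ?_, fun a ha => ?_⟩
          · intro ν hν
            rcases Finset.mem_union.1 (MvPolynomial.support_add hν) with h1 | h1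
            · exact hh ν h1
            · have := MvPolynomial.support_monomial (a := c) (s := lm g) ▸ h1
              by_cases hc0 : c = 0
              · rw [if_pos hc0] at this; simp at this
              · rw [if_neg hc0] at this
                rw [Finset.mem_singleton] at this
                subst this; exact ⟨hμgood.1, hμgood.2⟩
          · rw [hev0 a, hag a ha, map_add]
  -- reduction for arbitrary polynomials
  have hredall : ∀ g : MvPolynomial (Fin n) Fq,
      ∃ h : MvPolynomial (Fin n) Fq,
        (∀ ν ∈ h.support, (∀ i : Fin n, ν i ≤ q - 1) ∧ ∀ j : Fin r, ¬ lm (F j) ≤ ν) ∧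
        ∀ a : Fin n → Fq, (∀ j, eval a (F j) = 0) → eval a g = eval a h := by
    intro g
    by_cases hg : g = 0
    · exact ⟨0, by simp, by simp [hg]⟩
    · exact main (lm g) g hg rfl
  -- set up the finite types
  set S' := {a : Fin n → Fq // ∀ j, MvPolynomial.eval a (F j) = 0} with hS'
  set Δ' := {μ : Fin n →₀ ℕ //
      (∀ i : Fin n, μ i ≤ q - 1) ∧ ∀ j : Fin r, ¬ lm (F j) ≤ μ} with hΔ'
  haveI : Finite Δ' := by
    refine Finite.of_injective (fun μ : Δ' => fun i : Fin n => (⟨μ.1 i, ?_⟩ : Fin q)) ?_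
    · have := μ.2.1 i; omega
    · intro μ ν hμν
      apply Subtype.ext
      ext i
      exact congrArg Fin.val (congrFun hμν i)
  letI : Fintype Δ' := Fintype.ofFinite _
  letI : Fintype S' := Fintype.ofFinite _
  rw [Nat.card_eq_fintype_card, Nat.card_eq_fintype_card]
  -- the spanning family of monomial functions
  set v : Δ' → (S' → Fq) := fun μ => fun a => ∏ i : Fin n, (a.1 i) ^ (μ.1 i) with hv
  have hspan : Submodule.span Fq (Set.range v) = ⊤ := by
    rw [eq_top_iff]
    rintro φ -
    set φ' : (Fin n → Fq) → Fq :=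
      fun b => if hb : ∀ j, eval b (F j) = 0 then φ ⟨b, hb⟩ else 0 with hφ'
    have hmem : φ' ∈ (restrictDegree (Fin n) Fq (Fintype.card Fq - 1)).map
        (evalₗ Fq (Fin n)) := by
      rw [map_restrict_dom_evalₗ]; trivial
    obtain ⟨g, -, hg⟩ := Submodule.mem_map.1 hmem
    obtain ⟨h, hhsupp, hagree⟩ := hredall g
    have hφ : ∀ a : S', φ a = eval a.1 h := by
      intro a
      have h1 : φ' a.1 = φ a := by rw [hφ']; exact dif_pos a.2
      have h2 : eval a.1 g = φ' a.1 := by rw [← hg]; rfl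
      rw [← h1, ← h2, hagree a.1 a.2]
    have hkey : φ = ∑ μ : Δ', (h.coeff μ.1) • v μ := by
      funext a
      rw [hφ a, MvPolynomial.eval_eq']
      have hsum : (∑ μ : Δ', (h.coeff μ.1) • v μ) a
          = ∑ μ : Δ', h.coeff μ.1 * ∏ i : Fin n, (a.1 i) ^ (μ.1 i) := by
        simp [hv, Finset.sum_apply, smul_eq_mul]
      rw [hsum]
      have himg : ∑ μ : Δ', h.coeff μ.1 * ∏ i : Fin n, (a.1 i) ^ (μ.1 i)
          = ∑ d ∈ Finset.univ.image (Subtype.val : Δ' → (Fin n →₀ ℕ)),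
              h.coeff d * ∏ i : Fin n, (a.1 i) ^ (d i) := by
        rw [Finset.sum_image (fun x _ y _ hxy => Subtype.ext hxy)]
      rw [himg]
      refine Finset.sum_subset ?_ ?_
      · intro d hd
        exact Finset.mem_image.2 ⟨⟨d, hhsupp d hd⟩, Finset.mem_univ _, rfl⟩
      · intro d _ hd
        rw [MvPolynomial.notMem_support_iff.1 hd, zero_mul]
    rw [hkey]
    exact Submodule.sum_mem _ fun μ _ =>
      Submodule.smul_mem _ _ (Submodule.subset_span ⟨μ, rfl⟩)
  calc Fintype.card S' = Module.finrank Fq (S' → Fq) := (Module.finrank_pi Fq).symm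
    _ ≤ Fintype.card Δ' := finrank_le_of_span_eq_top hspan
end

section
/- Let q be a prime power, let k be a field containing the finite field F_q, and let d be a nonnegative integer. If f ∈ k[X_0, X_1, …, X_n] is a homogeneous polynomial of degree d that is a k-linear combination of projectively reduced monomials, and f(a) = 0 for every a ∈ F_q^{n+1} ∖ {0}, then f is the zero polynomial. -/
open MvPolynomial

/-- A multivariate polynomial whose degree in each variable is less than the cardinality of a
finite set `S`, and which vanishes at every point of the grid `S^m`, is zero. -/
private lemma grid_vanish {k : Type*} [Field k] (S : Finset k) :
    ∀ (m : ℕ) (g : MvPolynomial (Fin m) k),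
      (∀ i, g.degreeOf i < S.card) →
      (∀ a : Fin m → k, (∀ i, a i ∈ S) → eval a g = 0) → g = 0 := by
  intro m
  induction m with
  | zero =>
    intro g _ hval
    have h := hval Fin.elim0 (fun i => i.elim0)
    rw [eq_C_of_isEmpty g] at h ⊢
    rw [eval_C] at h
    rw [h, map_zero]
  | succ m ih =>
    intro g hdeg hval
    have key : ∀ i : ℕ, (finSuccEquiv k m g).coeff i = 0 := by
      intro i
      apply ih
      · intro j
        exact lt_of_le_of_lt (degreeOf_coeff_finSuccEquiv g j i) (hdeg j.succ)
      · intro a ha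
        have hp : ((finSuccEquiv k m g).map (eval a)) = 0 := by
          apply Polynomial.eq_zero_of_natDegree_lt_card_of_eval_eq_zero' _ S
          · intro y hy
            rw [← eval_eq_eval_mv_eval']
            apply hval
            intro j
            refine Fin.cases ?_ ?_ j
            · simpa using hy
            · intro j'; simpa using ha j'
          · calc ((finSuccEquiv k m g).map (eval a)).natDegree
                ≤ (finSuccEquiv k m g).natDegree := Polynomial.natDegree_map_le
              _ = degreeOf 0 g := natDegree_finSuccEquiv g
              _ < S.card := hdeg 0
        have h2 := congrArg (fun p => Polynomial.coeff p i) hp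
        simpa [coeff_eval_eq_eval_coeff] using h2
    have hzero : finSuccEquiv k m g = 0 :=
      Polynomial.ext fun i => by rw [key i, Polynomial.coeff_zero]
    exact (finSuccEquiv k m).injective (by rw [hzero, map_zero])

/-- If `f ∈ k[X_0,…,X_n]` is homogeneous of degree `d`, is a `k`-linear combination of
projectively reduced monomials (i.e. every monomial `μ` in its support satisfies
`deg_{X_i} μ ≤ q - 1` whenever some variable `X_j` with `j > i` occurs in `μ`), and
`f(a) = 0` for every `a ∈ F_q^{n+1} \ {0}`, then `f = 0`. -/
theorem projectively_reduced_homogeneous_vanishing_eq_zero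
    (q n d : ℕ) (hq : IsPrimePow q) (k : Type*) [Field k]
    (Fq : Subfield k) (hcard : Nat.card Fq = q)
    (f : MvPolynomial (Fin (n + 1)) k)
    (hhom : f.IsHomogeneous d)
    (hred : ∀ μ ∈ f.support, ∀ i j : Fin (n + 1), i < j → μ j ≠ 0 → μ i ≤ q - 1)
    (hvan : ∀ a : Fin (n + 1) → Fq, a ≠ 0 →
      MvPolynomial.eval (fun i => (a i : k)) f = 0) :
    f = 0 := by
  classical
  have hq2 : 2 ≤ q := hq.two_le
  have hfin : Finite Fq := Nat.finite_of_card_ne_zero (by omega)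
  have : Fintype Fq := Fintype.ofFinite Fq
  have hcard' : Fintype.card Fq = q := by rw [← Nat.card_eq_fintype_card, hcard]
  -- the grid set
  set S : Finset k := Finset.univ.image ((↑) : Fq → k) with hS
  have hScard : S.card = q := by
    rw [hS, Finset.card_image_of_injective _ Subtype.coe_injective, Finset.card_univ, hcard']
  have hmemS : ∀ x : k, x ∈ S ↔ x ∈ Fq := by
    intro x
    constructor
    · intro hx
      simp only [hS, Finset.mem_image] at hx
      obtain ⟨t, -, rfl⟩ := hx
      exact t.2
    · intro hx
      simp only [hS, Finset.mem_image]
      exact ⟨⟨x, hx⟩, Finset.mem_univ _, rfl⟩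
  -- power reduction on elements of S
  have hpow : ∀ x : k, x ∈ S → ∀ e : ℕ, 1 ≤ e → x ^ e = x ^ ((e - 1) % (q - 1) + 1) := by
    intro x hx e he
    rcases eq_or_ne x 0 with rfl | hx0
    · rw [zero_pow (by omega), zero_pow (by omega)]
    · have hmem : x ∈ Fq := (hmemS x).1 hx
      have hx' : (⟨x, hmem⟩ : Fq) ≠ 0 := by
        simp only [ne_eq, Subtype.ext_iff, ZeroMemClass.coe_zero]
        exact hx0
      have h1 : x ^ (q - 1) = 1 := by
        have h := FiniteField.pow_card_sub_one_eq_one (⟨x, hmem⟩ : Fq) hx'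
        rw [hcard'] at h
        have := congrArg ((↑) : Fq → k) h
        simpa using this
      have hdm : e = ((e - 1) % (q - 1) + 1) + (q - 1) * ((e - 1) / (q - 1)) := by
        have := Nat.div_add_mod (e - 1) (q - 1)
        omega
      calc x ^ e = x ^ (((e - 1) % (q - 1) + 1) + (q - 1) * ((e - 1) / (q - 1))) := by rw [← hdm]
        _ = x ^ ((e - 1) % (q - 1) + 1) * (x ^ (q - 1)) ^ ((e - 1) / (q - 1)) := by
            rw [pow_add, pow_mul]
        _ = x ^ ((e - 1) % (q - 1) + 1) := by rw [h1, one_pow, mul_one]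
  -- exponent reduction
  set r : ℕ → ℕ := fun e => if e = 0 then 0 else (e - 1) % (q - 1) + 1 with hrdef
  have hr0 : r 0 = 0 := by simp [hrdef]
  have hr_zero_iff : ∀ e, r e = 0 ↔ e = 0 := by
    intro e
    rcases eq_or_ne e 0 with rfl | he
    · simp [hrdef]
    · simp [hrdef, he]
  have hrle : ∀ e, r e ≤ q - 1 := by
    intro e
    rcases eq_or_ne e 0 with rfl | he
    · simp [hrdef]
    · simp only [hrdef, if_neg he]
      have := Nat.mod_lt (e - 1) (show 0 < q - 1 by omega)
      omega
  have hrfix : ∀ e, e ≤ q - 1 → r e = e := by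
    intro e he
    rcases eq_or_ne e 0 with rfl | he0
    · simp [hrdef]
    · simp only [hrdef, if_neg he0]
      rw [Nat.mod_eq_of_lt (by omega)]
      omega
  have hxpow : ∀ x : k, x ∈ S → ∀ e : ℕ, x ^ e = x ^ r e := by
    intro x hx e
    rcases eq_or_ne e 0 with rfl | he
    · rw [hr0]
    · rw [hrdef]
      simp only [if_neg he]
      exact hpow x hx e (by omega)
  set red : (Fin (n + 1) →₀ ℕ) → (Fin (n + 1) →₀ ℕ) := fun μ => μ.mapRange r hr0 with hreddef
  have hred_apply : ∀ μ i, red μ i = r (μ i) := fun μ i => Finsupp.mapRange_apply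
  -- degree sums
  have hdegsum : ∀ μ ∈ f.support, ∑ i, μ i = d := by
    intro μ hμ
    have h := hhom (mem_support_iff.mp hμ)
    have h2 : μ.degree = d := by rw [Finsupp.degree_eq_weight_one]; exact h
    rw [← h2, Finsupp.degree]
    exact (Finset.sum_subset (Finset.subset_univ _)
      (fun i _ hi => Finsupp.notMem_support_iff.mp hi)).symm
  -- injectivity of red on the support
  have hinj : ∀ μ ∈ f.support, ∀ ν ∈ f.support, red μ = red ν → μ = ν := by
    intro μ hμ ν hν h
    have happ : ∀ i, r (μ i) = r (ν i) := by
      intro i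
      have := congrArg (fun m => m i) h
      simpa [hred_apply] using this
    have hzero : ∀ i, μ i = 0 ↔ ν i = 0 := by
      intro i
      rw [← hr_zero_iff (μ i), ← hr_zero_iff (ν i), happ i]
    rcases eq_or_ne μ 0 with rfl | hμ0
    · ext i
      have := (hzero i).1 (by simp)
      simp [this]
    · have hne : μ.support.Nonempty := Finsupp.support_nonempty_iff.mpr hμ0
      set ℓ := μ.support.max' hne with hℓ
      have hℓmem : μ ℓ ≠ 0 := Finsupp.mem_support_iff.mp (μ.support.max'_mem hne)
      have hνℓ : ν ℓ ≠ 0 := fun h0 => hℓmem ((hzero ℓ).2 h0)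
      have hoff : ∀ i, i ≠ ℓ → μ i = ν i := by
        intro i hi
        rcases eq_or_ne (μ i) 0 with h0 | h0
        · rw [h0, ((hzero i).1 h0).symm]
        · have hmem : i ∈ μ.support := Finsupp.mem_support_iff.mpr h0
          have hlt : i < ℓ := lt_of_le_of_ne (μ.support.le_max' i hmem) hi
          have h1 : μ i ≤ q - 1 := hred μ hμ i ℓ hlt hℓmem
          have h2 : ν i ≤ q - 1 := hred ν hν i ℓ hlt hνℓ
          rw [← hrfix (μ i) h1, ← hrfix (ν i) h2]
          exact happ i
      have hsum : ∑ i, μ i = ∑ i, ν i := by rw [hdegsum μ hμ, hdegsum ν hν]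
      rw [← Finset.add_sum_erase _ μ (Finset.mem_univ ℓ),
        ← Finset.add_sum_erase _ ν (Finset.mem_univ ℓ)] at hsum
      have herase : ∑ i ∈ Finset.univ.erase ℓ, μ i = ∑ i ∈ Finset.univ.erase ℓ, ν i :=
        Finset.sum_congr rfl fun i hi => hoff i (Finset.ne_of_mem_erase hi)
      have hℓeq : μ ℓ = ν ℓ := by omega
      ext i
      rcases eq_or_ne i ℓ with rfl | hi
      · exact hℓeq
      · exact hoff i hi
  -- the reduced polynomial
  set F : MvPolynomial (Fin (n + 1)) k :=
    ∑ μ ∈ f.support, monomial (red μ) (f.coeff μ) with hFdef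
  -- F agrees with f on the grid
  have hevalF : ∀ a : Fin (n + 1) → k, (∀ i, a i ∈ S) → eval a F = eval a f := by
    intro a ha
    conv_rhs => rw [f.as_sum]
    rw [hFdef, map_sum, map_sum]
    refine Finset.sum_congr rfl fun μ _ => ?_
    rw [eval_monomial, eval_monomial]
    congr 1
    rw [hreddef]
    rw [Finsupp.prod_mapRange_index (fun i => pow_zero (a i))]
    exact Finsupp.prod_congr fun i _ => (hxpow (a i) (ha i) (μ i)).symm
  -- constant coefficient of f is zero
  have hone : ((fun _ => (1 : Fq)) : Fin (n + 1) → Fq) ≠ 0 := by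
    intro h
    have := congrFun h 0
    exact one_ne_zero this
  have hconst : f.coeff 0 = 0 := by
    rcases Nat.eq_zero_or_pos d with rfl | hd
    · have hC : f = C (f.coeff 0) := by
        ext μ
        rcases eq_or_ne μ 0 with rfl | hμ
        · simp
        · rw [coeff_C, if_neg (Ne.symm hμ)]
          by_contra h0
          have := hhom h0
          have hdeg0 : μ.degree = 0 := by rw [Finsupp.degree_eq_weight_one]; exact this
          exact hμ ((Finsupp.degree_eq_zero_iff μ).mp hdeg0)
      have := hvan (fun _ => 1) hone
      rw [hC] at this
      simpa using this
    · by_contra h0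
      have := hhom h0
      have hdeg0 : (0 : Fin (n + 1) →₀ ℕ).degree = d := by
        rw [Finsupp.degree_eq_weight_one]; exact this
      rw [map_zero] at hdeg0
      omega
  -- f vanishes on the grid
  have hfval : ∀ a : Fin (n + 1) → k, (∀ i, a i ∈ S) → eval a f = 0 := by
    intro a ha
    set b : Fin (n + 1) → Fq := fun i => ⟨a i, (hmemS (a i)).1 (ha i)⟩ with hb
    have hab : a = fun i => (b i : k) := by funext i; rfl
    rcases eq_or_ne b 0 with hb0 | hb0
    · have ha0 : a = fun _ => 0 := by
        funext i
        have hbi : b i = 0 := by rw [hb0]; rfl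
        have h2 : a i = ((b i : Fq) : k) := rfl
        rw [h2, hbi]
        exact ZeroMemClass.coe_zero Fq
      rw [ha0]
      have : eval (fun _ => (0 : k)) f = f.coeff 0 := by
        conv_lhs => rw [f.as_sum, map_sum]
        rcases eq_or_ne (f.coeff 0) 0 with h0 | h0
        · rw [h0]
          refine Finset.sum_eq_zero fun μ hμ => ?_
          have hμ0 : μ ≠ 0 := by
            intro h
            exact (mem_support_iff.mp hμ) (by rw [← h] at h0; exact h0)
          obtain ⟨i, hi⟩ : ∃ i, μ i ≠ 0 := by
            by_contra hc
            push_neg at hc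
            exact hμ0 (Finsupp.ext hc)
          rw [eval_monomial]
          rw [Finsupp.prod]
          rw [Finset.prod_eq_zero (Finsupp.mem_support_iff.mpr hi)
            (zero_pow hi)]
          rw [mul_zero]
        · have h0' : (0 : Fin (n + 1) →₀ ℕ) ∈ f.support := mem_support_iff.mpr h0
          rw [Finset.sum_eq_single (0 : Fin (n + 1) →₀ ℕ)]
          · simp
          · intro μ hμ hμ0
            obtain ⟨i, hi⟩ : ∃ i, μ i ≠ 0 := by
              by_contra hc
              push_neg at hc
              exact hμ0 (Finsupp.ext hc)
            rw [eval_monomial, Finsupp.prod,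
              Finset.prod_eq_zero (Finsupp.mem_support_iff.mpr hi) (zero_pow hi), mul_zero]
          · intro h; exact absurd h0' h
      rw [this]
      exact hconst
    · rw [hab]
      exact hvan b hb0
  -- F vanishes on the grid
  have hFval : ∀ a : Fin (n + 1) → k, (∀ i, a i ∈ S) → eval a F = 0 := fun a ha =>
    (hevalF a ha).trans (hfval a ha)
  -- degree bounds for F
  have hFcoeff : ∀ ν, F.coeff ν ≠ 0 → ∃ μ ∈ f.support, red μ = ν := by
    intro ν hν
    rw [hFdef, coeff_sum] at hν
    obtain ⟨μ, hμ, hne⟩ := Finset.exists_ne_zero_of_sum_ne_zero hν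
    refine ⟨μ, hμ, ?_⟩
    by_contra hc
    rw [coeff_monomial, if_neg hc] at hne
    exact hne rfl
  have hFdeg : ∀ i, F.degreeOf i < S.card := by
    intro i
    rw [hScard]
    rw [degreeOf_lt_iff (by omega)]
    intro m hm
    obtain ⟨μ, -, rfl⟩ := hFcoeff m (mem_support_iff.mp hm)
    have := hrle (μ i)
    rw [hred_apply]
    omega
  -- conclude F = 0
  have hF0 : F = 0 := grid_vanish S (n + 1) F hFdeg hFval
  -- recover coefficients of f
  have hcoeff : ∀ μ ∈ f.support, f.coeff μ = 0 := by
    intro μ hμ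
    have h1 : F.coeff (red μ) = f.coeff μ := by
      rw [hFdef, coeff_sum]
      rw [Finset.sum_eq_single μ]
      · rw [coeff_monomial, if_pos rfl]
      · intro ν hν hne
        rw [coeff_monomial, if_neg]
        intro heq
        exact hne (hinj ν hν μ hμ heq)
      · intro h; exact absurd hμ h
    rw [hF0, coeff_zero] at h1
    exact h1.symm
  have hsupp : f.support = ∅ :=
    Finset.eq_empty_of_forall_notMem fun μ hμ => (mem_support_iff.mp hμ) (hcoeff μ hμ)
  exact support_eq_empty.mp hsupp
end

section
/- Let q be a prime power, let k be a field containing the finite field F_q, and let d be a nonnegative integer. Then 𝔯_d ∩ Γ*_q(k)_d = {0}, where 𝔯_d denotes the k-vector space spanned by the projectively reduced monomials of degree d in k[X_0, …, X_n], and Γ*_q(k)_d denotes the space of homogeneous polynomials of degree d lying in the ideal Γ*_q(k). -/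
open MvPolynomial

/-- Key vanishing lemma: a polynomial in `N` variables over `k` whose exponents are all
`≤ q - 1`, vanishing at every point with coordinates in a subfield `Fq` of cardinality `q`,
is zero. -/
lemma aux_vanish_of_low_degree (q : ℕ) (hq0 : 0 < q) (k : Type*) [Field k]
    (Fq : Subfield k) (hcard : Nat.card Fq = q) :
    ∀ (N : ℕ) (g : MvPolynomial (Fin N) k),
      (∀ μ ∈ g.support, ∀ i, μ i ≤ q - 1) →
      (∀ x : Fin N → k, (∀ i, x i ∈ Fq) → eval x g = 0) → g = 0 := by
  have hfin : Finite Fq := Nat.finite_of_card_ne_zero (by rw [hcard]; omega)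
  have : Fintype Fq := Fintype.ofFinite Fq
  have hcard' : Fintype.card Fq = q := by rw [← Nat.card_eq_fintype_card, hcard]
  intro N
  induction N with
  | zero =>
    intro g _ hev
    obtain ⟨c, rfl⟩ := MvPolynomial.C_surjective (Fin 0) g
    have := hev (fun i => i.elim0) (fun i => i.elim0)
    simpa using this
  | succ N ih =>
    intro g hdeg hev
    set p := finSuccEquiv k N g with hp_def
    have hp : p = 0 := by
      ext j ν
      rw [Polynomial.coeff_zero, coeff_zero]
      have hcoeff : p.coeff j = 0 := by
        apply ih
        · intro μ hμ i
          have h1 : coeff (μ.cons j) g ≠ 0 := by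
            rw [← finSuccEquiv_coeff_coeff]
            exact MvPolynomial.mem_support_iff.mp hμ
          have := hdeg (μ.cons j) (MvPolynomial.mem_support_iff.mpr h1) i.succ
          simpa [Finsupp.cons_succ] using this
        · intro x hx
          have hmap : p.map (eval x) = 0 := by
            apply Polynomial.eq_zero_of_natDegree_lt_card_of_eval_eq_zero
              (f := fun a : Fq => (a : k)) _ Subtype.val_injective
            · intro a
              rw [← eval_eq_eval_mv_eval']
              refine hev _ (fun i => ?_)
              refine Fin.cases ?_ ?_ i
              · simpa using a.2
              · intro i'; simpa using hx i'
            · rw [hcard']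
              calc (p.map (eval x)).natDegree ≤ p.natDegree :=
                    Polynomial.natDegree_map_le
                _ = degreeOf 0 g := natDegree_finSuccEquiv g
                _ ≤ q - 1 := degreeOf_le_iff.mpr (fun m hm => hdeg m hm 0)
                _ < q := by omega
          have := congrArg (fun r : Polynomial k => r.coeff j) hmap
          simpa [Polynomial.coeff_map] using this
      rw [hcoeff, coeff_zero]
    have : finSuccEquiv k N g = finSuccEquiv k N 0 := by rw [map_zero, ← hp_def, hp]
    exact (finSuccEquiv k N).injective this

/-- `𝔯_d ∩ Γ*_q(k)_d = {0}`: if `f ∈ k[X_0,…,X_n]` is homogeneous of degree `d`, is a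
`k`-linear combination of projectively reduced monomials (every monomial `μ` in its
support satisfies `deg_{X_i} μ ≤ q - 1` whenever some variable `X_j` with `j > i`
occurs in `μ`), and `f` lies in the ideal `Γ*_q(k)` generated by the Fermat polynomials
`X_i^q X_j - X_i X_j^q` for `i < j`, then `f = 0`. -/
theorem projectivelyReduced_inter_fermatIdeal_eq_zero
    (q n d : ℕ) (hq : IsPrimePow q) (k : Type*) [Field k]
    (Fq : Subfield k) (hcard : Nat.card Fq = q)
    (f : MvPolynomial (Fin (n + 1)) k)
    (hhom : f.IsHomogeneous d)
    (hred : ∀ μ ∈ f.support, ∀ i j : Fin (n + 1), i < j → μ j ≠ 0 → μ i ≤ q - 1)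
    (hmem : f ∈ Ideal.span {p : MvPolynomial (Fin (n + 1)) k |
      ∃ i j : Fin (n + 1), i < j ∧ p = X i ^ q * X j - X i * X j ^ q}) :
    f = 0 := by
  classical
  have hq0 : 0 < q := hq.pos
  have hfin : Finite Fq := Nat.finite_of_card_ne_zero (by rw [hcard]; omega)
  have : Fintype Fq := Fintype.ofFinite Fq
  have hcard' : Fintype.card Fq = q := by rw [← Nat.card_eq_fintype_card, hcard]
  -- Step A: f vanishes at every Fq-point
  have hpow : ∀ c ∈ Fq, c ^ q = c := by
    intro c hc
    have := FiniteField.pow_card (⟨c, hc⟩ : Fq)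
    rw [hcard'] at this
    simpa using congrArg (Subtype.val) this
  have stepA : ∀ x : Fin (n + 1) → k, (∀ i, x i ∈ Fq) → eval x f = 0 := by
    intro x hx
    have hker : Ideal.span {p : MvPolynomial (Fin (n + 1)) k |
        ∃ i j : Fin (n + 1), i < j ∧ p = X i ^ q * X j - X i * X j ^ q} ≤
        RingHom.ker (eval x) := by
      rw [Ideal.span_le]
      rintro p ⟨i, j, hij, rfl⟩
      simp only [SetLike.mem_coe, RingHom.mem_ker, map_sub, map_mul, map_pow, eval_X]
      rw [hpow (x i) (hx i), hpow (x j) (hx j)]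
      ring
    exact hker hmem
  -- degree of every monomial in the support is d
  have hdeg : ∀ μ ∈ f.support, ∑ j : Fin (n + 1), μ j = d := by
    intro μ hμ
    have h1 : (Finsupp.weight 1) μ = d := hhom (MvPolynomial.mem_support_iff.mp hμ)
    rw [show (Finsupp.weight 1 : (Fin (n + 1) →₀ ℕ) →+ ℕ) = Finsupp.degree from
      Finsupp.degree_eq_weight_one.symm] at h1
    rw [← h1, Finsupp.degree]
    exact (Finset.sum_subset (Finset.subset_univ _)
      (fun i _ hi => Finsupp.notMem_support_iff.mp hi)).symm
  -- Main claim by strong induction on the leading index ℓ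
  have key : ∀ ℓ : ℕ, ℓ ≤ n → ∀ μ ∈ f.support,
      (∀ j : Fin (n + 1), ℓ < (j : ℕ) → μ j = 0) → coeff μ f = 0 := by
    intro ℓ
    induction ℓ using Nat.strong_induction_on with
    | _ ℓ IH =>
    intro hℓn μ hμ htail
    set L : Fin (n + 1) := ⟨ℓ, by omega⟩ with hL_def
    -- coefficients of monomials supported strictly below ℓ vanish
    have hzero : ∀ μ' ∈ f.support, (∀ j : Fin (n + 1), ℓ < (j : ℕ) → μ' j = 0) →
        μ' L = 0 → coeff μ' f = 0 := by
      intro μ' hμ' htail' hL'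
      rcases Nat.eq_zero_or_pos ℓ with h0 | hpos
      · have hμ'0 : μ' = 0 := by
          ext j
          rcases Nat.eq_zero_or_pos (j : ℕ) with hj | hj
          · have : j = L := by
              apply Fin.ext; simp [hL_def, hj, h0]
            rw [this]; exact hL'
          · exact htail' j (by omega)
        rw [hμ'0]
        have := stepA (fun _ => 0) (fun _ => Fq.zero_mem)
        rwa [eval_zero'] at this
      · refine IH (ℓ - 1) (by omega) (by omega) μ' hμ' (fun j hj => ?_)
        rcases eq_or_lt_of_le (Nat.succ_le_of_lt hj) with heq | hlt
        · have : j = L := by apply Fin.ext; simp [hL_def]; omega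
          rw [this]; exact hL'
        · exact htail' j (by omega)
    by_cases hLμ : μ L = 0
    · exact hzero μ hμ htail hLμ
    -- the interesting case: μ L ≠ 0
    set P : (Fin (n + 1) →₀ ℕ) → Prop :=
      fun μ' => (∀ j : Fin (n + 1), ℓ < (j : ℕ) → μ' j = 0) ∧ μ' L ≠ 0 with hP_def
    set S : Finset (Fin (n + 1) →₀ ℕ) := f.support.filter P with hS_def
    set g : MvPolynomial (Fin (n + 1)) k :=
      ∑ μ' ∈ S, monomial (μ'.erase L) (coeff μ' f) with hg_def
    -- injectivity of erase on S
    have hinj : ∀ μ' ∈ S, ∀ μ'' ∈ S, μ'.erase L = μ''.erase L → μ' = μ'' := by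
      intro μ' hμ' μ'' hμ'' herase
      have h' := hdeg μ' (Finset.mem_of_mem_filter _ hμ')
      have h'' := hdeg μ'' (Finset.mem_of_mem_filter _ hμ'')
      have hsum' : ∑ j : Fin (n + 1), μ' j = μ' L + ∑ j ∈ Finset.univ.erase L, μ' j :=
        (Finset.add_sum_erase _ _ (Finset.mem_univ L)).symm
      have hsum'' : ∑ j : Fin (n + 1), μ'' j = μ'' L + ∑ j ∈ Finset.univ.erase L, μ'' j :=
        (Finset.add_sum_erase _ _ (Finset.mem_univ L)).symm
      have hoff : ∀ j : Fin (n + 1), j ≠ L → μ' j = μ'' j := by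
        intro j hj
        have := congrFun (congrArg (fun h : Fin (n + 1) →₀ ℕ => (h : Fin (n + 1) → ℕ)) herase) j
        simpa [Finsupp.erase_ne hj] using this
      have hsame : ∑ j ∈ Finset.univ.erase L, μ' j = ∑ j ∈ Finset.univ.erase L, μ'' j :=
        Finset.sum_congr rfl (fun j hj => hoff j (Finset.ne_of_mem_erase hj))
      have hLL : μ' L = μ'' L := by omega
      ext j
      by_cases hj : j = L
      · rw [hj]; exact hLL
      · exact hoff j hj
    -- g vanishes by the auxiliary lemma
    have hg0 : g = 0 := by
      apply aux_vanish_of_low_degree q hq0 k Fq hcard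
      · intro ν hν i
        have hcν : coeff ν g ≠ 0 := MvPolynomial.mem_support_iff.mp hν
        rw [hg_def] at hcν
        have : ∑ μ' ∈ S, coeff ν (monomial (μ'.erase L) (coeff μ' f)) ≠ 0 := by
          rw [MvPolynomial.coeff_sum] at hcν; exact hcν
        obtain ⟨μ', hμ'S, hne⟩ := Finset.exists_ne_zero_of_sum_ne_zero this
        rw [coeff_monomial] at hne
        have herase : μ'.erase L = ν := by
          by_contra h; rw [if_neg h] at hne; exact hne rfl
        obtain ⟨hμ'supp, hP'⟩ := Finset.mem_filter.mp hμ'S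
        by_cases hiL : i = L
        · rw [← herase, hiL]; simp
        · rw [← herase, Finsupp.erase_ne hiL]
          rcases lt_or_ge (i : ℕ) ℓ with hlt | hge
          · exact hred μ' hμ'supp i L (by rw [Fin.lt_def]; simpa [hL_def] using hlt) hP'.2
          · have : (i : ℕ) ≠ ℓ := fun h => hiL (Fin.ext (by simpa [hL_def] using h))
            rw [hP'.1 i (by omega)]
            omega
      · intro x hx
        set b : Fin (n + 1) → k := fun i =>
          if (i : ℕ) < ℓ then x i else if (i : ℕ) = ℓ then 1 else 0 with hb_def
        have hbFq : ∀ i, b i ∈ Fq := by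
          intro i
          rw [hb_def]
          dsimp only
          split
          · exact hx i
          · split
            · exact Fq.one_mem
            · exact Fq.zero_mem
        have hevb := stepA b hbFq
        rw [eval_eq' b f] at hevb
        have hsplit : ∀ μ' ∈ f.support,
            coeff μ' f * ∏ i, b i ^ μ' i =
            if P μ' then coeff μ' f * ∏ i, x i ^ (μ'.erase L) i else 0 := by
          intro μ' hμ'
          by_cases hPμ' : P μ'
          · rw [if_pos hPμ']
            congr 1
            apply Finset.prod_congr rfl
            intro i _
            rcases lt_trichotomy (i : ℕ) ℓ with hlt | heq | hgt
            · have hiL : i ≠ L := fun h => by simp [h, hL_def] at hlt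
              rw [Finsupp.erase_ne hiL, hb_def]
              simp [hlt]
            · have hiL : i = L := Fin.ext (by simpa [hL_def] using heq)
              rw [hiL]
              simp [hb_def, hL_def]
            · have hiL : i ≠ L := fun h => by simp [h, hL_def] at hgt
              rw [Finsupp.erase_ne hiL, hPμ'.1 i hgt]
              simp
          · rw [if_neg hPμ']
            by_cases htail' : ∀ j : Fin (n + 1), ℓ < (j : ℕ) → μ' j = 0
            · have hL0 : μ' L = 0 := by
                by_contra hne
                exact hPμ' ⟨htail', hne⟩
              rw [hzero μ' hμ' htail' hL0, zero_mul]
            · push_neg at htail'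
              obtain ⟨j, hjℓ, hjne⟩ := htail'
              apply mul_eq_zero_of_right
              apply Finset.prod_eq_zero (Finset.mem_univ j)
              have hbj : b j = 0 := by
                rw [hb_def]; simp only; rw [if_neg (by omega), if_neg (by omega)]
              rw [hbj, zero_pow hjne]
        rw [Finset.sum_congr rfl hsplit, Finset.sum_ite, Finset.sum_const_zero, add_zero]
          at hevb
        rw [hg_def, map_sum]
        rw [← hevb]
        apply Finset.sum_congr
        · rw [hS_def]
        · intro μ' _
          rw [eval_monomial]
          congr 1
          exact Finsupp.prod_pow _ _
    -- extract the coefficient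
    have hμS : μ ∈ S := Finset.mem_filter.mpr ⟨hμ, htail, hLμ⟩
    have hcg : coeff (μ.erase L) g = coeff μ f := by
      rw [hg_def, MvPolynomial.coeff_sum]
      rw [Finset.sum_eq_single_of_mem μ hμS]
      · rw [coeff_monomial, if_pos rfl]
      · intro μ'' hμ''S hne
        rw [coeff_monomial, if_neg]
        intro h
        exact hne (hinj μ'' hμ''S μ hμS h)
    rw [← hcg, hg0, coeff_zero]
  -- conclude
  ext μ
  rw [coeff_zero]
  by_cases hμ : μ ∈ f.support
  · exact key n le_rfl μ hμ (fun j hj => absurd j.isLt (by omega))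
  · exact MvPolynomial.notMem_support_iff.mp hμ
end

section
/- Let q be a prime power, let k be a field containing the finite field F_q, and let d be a nonnegative integer. Every homogeneous polynomial f ∈ k[X_0, X_1, …, X_n] of degree d can be written uniquely as f = g + γ, where g is a k-linear combination of projectively reduced monomials of degree d and γ is a homogeneous polynomial of degree d in the ideal Γ*_q(k); consequently, the space 𝒮_d of homogeneous polynomials of degree d decomposes as 𝒮_d = 𝔯_d ⊕ Γ*_q(k)_d. -/
open MvPolynomial

namespace FermatAux

def fold (q e : ℕ) : ℕ := if e = 0 then 0 else (e - 1) % (q - 1) + 1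

lemma fold_lt {q : ℕ} (hq : 2 ≤ q) (e : ℕ) : fold q e < q := by
  unfold fold
  split
  · omega
  · have := Nat.mod_lt (e - 1) (show 0 < q - 1 by omega)
    omega

lemma fold_eq_self {q e : ℕ} (hq : 2 ≤ q) (he : e < q) : fold q e = e := by
  unfold fold
  split
  · omega
  · rw [Nat.mod_eq_of_lt (by omega)]
    omega

lemma pow_fold {k : Type*} [Field k] {q : ℕ} (hq : 2 ≤ q) {t : k} (ht : t ^ q = t) (e : ℕ) :
    t ^ e = t ^ fold q e := by
  induction e using Nat.strong_induction_on with
  | _ e ih =>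
    rcases lt_or_ge e q with h | h
    · rw [fold_eq_self hq h]
    · have h2 : t ^ e = t ^ (e - q + 1) := by
        conv_lhs => rw [show e = (e - q) + q by omega]
        rw [pow_add, ht, ← pow_succ]
      have h3 : fold q (e - q + 1) = fold q e := by
        unfold fold
        have : e - q + 1 - 1 = e - 1 - (q - 1) := by omega
        rw [if_neg (by omega), if_neg (by omega), this]
        conv_rhs => rw [show e - 1 = (e - 1 - (q - 1)) + (q - 1) by omega,
          Nat.add_mod_right]
      rw [h2, ih (e - q + 1) (by omega), h3]

lemma isHom_iff {k : Type*} [CommSemiring k] {σ : Type*} {φ : MvPolynomial σ k} {n : ℕ} :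
    φ.IsHomogeneous n ↔ ∀ μ ∈ φ.support, Finsupp.degree μ = n := by
  unfold MvPolynomial.IsHomogeneous MvPolynomial.IsWeightedHomogeneous
  simp only [mem_support_iff, Pi.one_def, ← Finsupp.degree_eq_weight_one]

variable {k : Type*} [Field k]

/-- A homogeneous polynomial with projectively reduced support that vanishes
on all `F_q`-points is zero. -/
lemma red_vanish (q : ℕ) (hq : 2 ≤ q) (Fq : Subfield k) [Fintype Fq]
    (hcard : Fintype.card Fq = q) (hpow : ∀ t : Fq, (t : k) ^ q = (t : k)) :
    ∀ (m d : ℕ) (g : MvPolynomial (Fin m) k), g.IsHomogeneous d →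
      (∀ μ ∈ g.support, ∀ i j : Fin m, i < j → μ j ≠ 0 → μ i ≤ q - 1) →
      (∀ x : Fin m → Fq, eval (fun i => (x i : k)) g = 0) → g = 0 := by
  intro m
  induction m with
  | zero =>
    intro d g _ _ hvan
    have h0 := hvan (fun i => i.elim0)
    rw [eq_C_of_isEmpty g] at h0 ⊢
    rw [eval_C] at h0
    rw [h0, map_zero]
  | succ m ih =>
    intro d g ghom gred gvan
    set F := finSuccEquiv k m g with hF
    -- coefficients
    have hcc : ∀ (e : ℕ) (ν : Fin m →₀ ℕ), coeff ν (F.coeff e) = coeff (ν.cons e) g := by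
      intro e ν
      rw [hF, finSuccEquiv_coeff_coeff]
    -- vanish for e > d
    have hbig : ∀ e, d < e → F.coeff e = 0 := by
      intro e he
      ext ν
      rw [hcc, coeff_zero]
      apply ghom.coeff_eq_zero
      have : Finsupp.degree (ν.cons e) = e + Finsupp.degree ν := by
        simpa [Finsupp.degree_apply, Finsupp.sum] using Finsupp.sum_cons m ν e
      omega
    -- vanish for q ≤ e, e ≠ d
    have hconstsupp : ∀ e, q ≤ e → ∀ ν ∈ (F.coeff e).support, ν = 0 := by
      intro e he ν hν
      by_contra hν0
      obtain ⟨j, hj⟩ := Finsupp.ne_iff.mp hν0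
      rw [Finsupp.coe_zero, Pi.zero_apply] at hj
      have hmem : ν.cons e ∈ g.support := by
        rw [mem_support_iff, ← hcc]
        exact mem_support_iff.mp hν
      have := gred _ hmem 0 j.succ (Fin.succ_pos j) (by rwa [Finsupp.cons_succ])
      rw [Finsupp.cons_zero] at this
      omega
    have hzero : ∀ e, q ≤ e → e ≠ d → F.coeff e = 0 := by
      intro e he hed
      ext ν
      rw [hcc, coeff_zero]
      rcases eq_or_ne ν 0 with rfl | hν
      · apply ghom.coeff_eq_zero
        have : Finsupp.degree ((0 : Fin m →₀ ℕ).cons e) = e + 0 := by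
          simpa [Finsupp.degree_apply, Finsupp.sum] using Finsupp.sum_cons m (0 : Fin m →₀ ℕ) e
        simp only [map_zero, add_zero] at this ⊢
        omega
      · by_contra hne
        exact hν (hconstsupp e he ν (by rw [mem_support_iff, hcc]; exact hne))
    -- reducedness of coefficients
    have hred : ∀ e, ∀ ν ∈ (F.coeff e).support, ∀ i j : Fin m, i < j → ν j ≠ 0 → ν i ≤ q - 1 := by
      intro e ν hν i j hij hj
      have hmem : ν.cons e ∈ g.support := by
        rw [mem_support_iff, ← hcc]
        exact mem_support_iff.mp hν
      have := gred _ hmem i.succ j.succ (Fin.succ_lt_succ_iff.mpr hij)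
        (by rwa [Finsupp.cons_succ])
      rwa [Finsupp.cons_succ] at this
    -- IH applier
    have hIH : ∀ r, r < q → (∀ y : Fin m → Fq, eval (fun i => (y i : k)) (F.coeff r) = 0) →
        F.coeff r = 0 := by
      intro r hr hvan
      rcases le_or_gt r d with hrd | hrd
      · exact ih (d - r) (F.coeff r)
          (ghom.finSuccEquiv_coeff_isHomogeneous r (d - r) (by omega)) (hred r) hvan
      · exact hbig r hrd
    -- the evaluation identity
    have hev : ∀ (t : Fq) (y : Fin m → Fq),
        Polynomial.eval ((t : k)) (F.map (eval fun i => (y i : k))) = 0 := by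
      intro t y
      have hx := gvan (Fin.cons t y)
      have hfun : (fun i => ((Fin.cons t y : Fin (m+1) → Fq) i : k)) =
          Fin.cons (t : k) (fun i => (y i : k)) := by
        funext i
        refine Fin.cases ?_ (fun i => ?_) i <;> simp
      rw [hfun, eval_eq_eval_mv_eval'] at hx
      exact hx
    -- the folded univariate polynomial is zero
    have hfold0 : ∀ y : Fin m → Fq,
        (∑ e ∈ F.support, Polynomial.C (eval (fun i => (y i : k)) (F.coeff e)) *
          Polynomial.X ^ fold q e) = 0 := by
      intro y
      set P : Polynomial k := ∑ e ∈ F.support,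
        Polynomial.C (eval (fun i => (y i : k)) (F.coeff e)) * Polynomial.X ^ fold q e with hP
      have hdeg : P.natDegree < q := by
        have : P.natDegree ≤ q - 1 := by
          apply Polynomial.natDegree_sum_le_of_forall_le
          intro e _
          exact (Polynomial.natDegree_C_mul_X_pow_le _ _).trans
            (by have := fold_lt hq e; omega)
        omega
      apply Polynomial.eq_zero_of_natDegree_lt_card_of_eval_eq_zero P
        (f := fun t : Fq => (t : k)) Subtype.val_injective _ (by rwa [hcard])
      intro t
      have : P.eval (t : k) = Polynomial.eval ((t : k)) (F.map (eval fun i => (y i : k))) := by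
        rw [hP, Polynomial.eval_finset_sum, Polynomial.eval_map, Polynomial.eval₂_eq_sum,
          Polynomial.sum_def]
        apply Finset.sum_congr rfl
        intro e _
        rw [Polynomial.eval_mul, Polynomial.eval_C, Polynomial.eval_pow, Polynomial.eval_X,
          ← pow_fold hq (hpow t)]
      rw [this, hev t y]
    -- coefficient extraction
    have main : ∀ r, r < q → ∀ y : Fin m → Fq,
        eval (fun i => (y i : k)) (F.coeff r) =
          - (if fold q d = r ∧ q ≤ d then eval (fun i => (y i : k)) (F.coeff d) else 0) := by
      intro r hr y
      have h0 := congrArg (fun p => Polynomial.coeff p r) (hfold0 y)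
      simp only [Polynomial.finset_sum_coeff, Polynomial.coeff_C_mul, Polynomial.coeff_X_pow,
        Polynomial.coeff_zero, mul_ite, mul_one, mul_zero] at h0
      -- h0 : ∑ e ∈ F.support, ite (r = fold q e) (eval ... (F.coeff e)) 0 = 0
      set φ : ℕ → k := fun e => if r = fold q e then eval (fun i => (y i : k)) (F.coeff e) else 0
        with hφ
      have hnote1 : ∀ e, e ∉ F.support → φ e = 0 := by
        intro e he
        rw [Polynomial.notMem_support_iff] at he
        simp [hφ, he]
      have hnote2 : ∀ e ∈ F.support, e ∉ ({r, d} : Finset ℕ) → φ e = 0 := by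
        intro e heF he
        simp only [Finset.mem_insert, Finset.mem_singleton, not_or] at he
        rw [hφ]
        simp only
        rw [if_neg]
        intro hfe
        rcases lt_or_ge e q with h | h
        · rw [fold_eq_self hq h] at hfe
          exact he.1 hfe.symm
        · exact he.2 (by_contra fun hed =>
            Polynomial.notMem_support_iff.mpr (hzero e h hed) heF)
      have hsum : ∑ e ∈ ({r, d} : Finset ℕ), φ e = 0 := by
        have e1 : ∑ e ∈ F.support ∪ ({r, d} : Finset ℕ), φ e = F.support.sum φ := by
          symm
          apply Finset.sum_subset Finset.subset_union_left
          intro x _ hx2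
          exact hnote1 x hx2
        have e2 : ∑ e ∈ F.support ∪ ({r, d} : Finset ℕ), φ e =
            ∑ e ∈ ({r, d} : Finset ℕ), φ e := by
          symm
          apply Finset.sum_subset Finset.subset_union_right
          intro x hx hx2
          rcases Finset.mem_union.mp hx with h | h
          · exact hnote2 x h hx2
          · exact absurd h hx2
        rw [← e2, e1, h0]
      have hφr : φ r = eval (fun i => (y i : k)) (F.coeff r) := by
        rw [hφ]
        simp only
        rw [if_pos (fold_eq_self hq hr).symm]
      rcases eq_or_ne r d with rfl | hrd
      · have hset : ({r, r} : Finset ℕ) = {r} := by simp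
        rw [hset, Finset.sum_singleton, hφr] at hsum
        rw [if_neg (fun hc => absurd hr (not_lt.mpr hc.2)), neg_zero]
        exact hsum
      · rw [Finset.sum_pair hrd] at hsum
        have hφd : φ d = if fold q d = r ∧ q ≤ d then
            eval (fun i => (y i : k)) (F.coeff d) else 0 := by
          rw [hφ]
          simp only
          by_cases h1 : fold q d = r
          · have h2 : q ≤ d := by
              by_contra h2
              exact hrd (by rw [← fold_eq_self hq (lt_of_not_ge h2), h1])
            rw [if_pos h1.symm, if_pos ⟨h1, h2⟩]
          · rw [if_neg (fun h => h1 h.symm), if_neg (fun h => h1 h.1)]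
        rw [hφr, hφd] at hsum
        exact eq_neg_of_add_eq_zero_left hsum
    -- coefficients not hit by the fold of d vanish
    have hvanr : ∀ r, r < q → ¬(fold q d = r ∧ q ≤ d) → F.coeff r = 0 := by
      intro r hr hcond
      apply hIH r hr
      intro y
      rw [main r hr y, if_neg hcond, neg_zero]
    have hall : ∀ e, F.coeff e = 0 := by
      rcases lt_or_ge d q with hdq | hdq
      · intro e
        rcases lt_or_ge e q with h | h
        · exact hvanr e h (fun hc => by omega)
        · exact hzero e h (by omega)
      · have hr0 : fold q d < q := fold_lt hq d
        have hcd : ∀ ν : Fin m →₀ ℕ, ν ≠ 0 → coeff ν (F.coeff d) = 0 := by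
          intro ν hν
          by_contra hne
          exact hν (hconstsupp d hdq ν (mem_support_iff.mpr hne))
        have hC : F.coeff d = C (coeff 0 (F.coeff d)) := by
          ext ν
          rw [coeff_C]
          split
          · next h => rw [← h]
          · next h => exact hcd ν (fun hh => h hh.symm)
        have h00 : coeff 0 (F.coeff (fold q d)) = 0 := by
          rw [hcc]
          apply ghom.coeff_eq_zero
          have hdeg : Finsupp.degree ((0 : Fin m →₀ ℕ).cons (fold q d)) =
              fold q d + Finsupp.degree (0 : Fin m →₀ ℕ) := by
            simpa [Finsupp.degree_apply, Finsupp.sum] using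
              Finsupp.sum_cons m (0 : Fin m →₀ ℕ) (fold q d)
          simp only [map_zero] at hdeg
          omega
        have hd0 : F.coeff d = 0 := by
          have hmain0 := main (fold q d) hr0 (fun _ => (0 : Fq))
          rw [if_pos ⟨rfl, hdq⟩] at hmain0
          have hz : (fun i : Fin m => (((0 : Fq)) : k)) = (fun _ : Fin m => (0 : k)) := by
            funext i
            simp
          rw [hz, eval_zero', constantCoeff_eq] at hmain0
          rw [h00] at hmain0
          have hc0 : coeff 0 (F.coeff d) = 0 := by
            have := hmain0.symm
            rwa [neg_eq_zero] at this
          rw [hC, hc0, map_zero]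
        intro e
        rcases lt_or_ge e q with h | h
        · by_cases hcond : fold q d = e ∧ q ≤ d
          · apply hIH e h
            intro y
            rw [main e h y, if_pos hcond, hd0, map_zero, neg_zero]
          · exact hvanr e h hcond
        · rcases eq_or_ne e d with rfl | hed
          · exact hd0
          · exact hzero e h hed
    have hF0 : F = 0 := Polynomial.ext fun e => by rw [hall e, Polynomial.coeff_zero]
    exact (finSuccEquiv k m).injective
      (show finSuccEquiv k m g = finSuccEquiv k m 0 by rw [map_zero, ← hF, hF0])

/-- The measure used for termination of monomial reduction. -/
def msr (n : ℕ) (μ : Fin (n + 1) →₀ ℕ) : ℕ := μ.sum fun l e => e * (n - (l : ℕ))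

lemma msr_add (n : ℕ) (a b : Fin (n + 1) →₀ ℕ) : msr n (a + b) = msr n a + msr n b :=
  Finsupp.sum_add_index' (fun _ => by simp) (fun _ _ _ => add_mul _ _ _)

lemma msr_single (n : ℕ) (i : Fin (n + 1)) (c : ℕ) : msr n (Finsupp.single i c) = c * (n - (i : ℕ)) :=
  Finsupp.sum_single_index (by simp)

lemma deg_add {n : ℕ} (a b : Fin n →₀ ℕ) :
    Finsupp.degree (a + b) = Finsupp.degree a + Finsupp.degree b := by
  simp only [Finsupp.degree_eq_weight_one]
  exact map_add _ a b

lemma deg_single {n : ℕ} (i : Fin n) (c : ℕ) :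
    Finsupp.degree (Finsupp.single i c) = c := by
  rcases eq_or_ne c 0 with rfl | h
  · simp [Finsupp.degree]
  · simp [Finsupp.degree_apply, Finsupp.support_single_ne_zero _ h]

lemma monomial_reduce {k : Type*} [Field k] (q n : ℕ) (hq : 2 ≤ q) :
    ∀ (N : ℕ) (μ : Fin (n + 1) →₀ ℕ), msr n μ < N →
      ∃ g : MvPolynomial (Fin (n + 1)) k,
        g.IsHomogeneous (Finsupp.degree μ) ∧
        (∀ ν ∈ g.support, ∀ i j : Fin (n + 1), i < j → ν j ≠ 0 → ν i ≤ q - 1) ∧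
        (monomial μ (1 : k)) - g ∈ Ideal.span {p : MvPolynomial (Fin (n + 1)) k |
          ∃ i j : Fin (n + 1), i < j ∧ p = X i ^ q * X j - X i * X j ^ q} := by
  classical
  intro N
  induction N with
  | zero => exact fun μ h => absurd h (by omega)
  | succ N ihN =>
    intro μ hμ
    by_cases hred : ∀ i j : Fin (n + 1), i < j → μ j ≠ 0 → μ i ≤ q - 1
    · refine ⟨monomial μ 1, isHomogeneous_monomial 1 rfl, ?_, by
        rw [sub_self]; exact Ideal.zero_mem _⟩
      intro ν hν
      rw [support_monomial, if_neg one_ne_zero, Finset.mem_singleton] at hν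
      subst hν
      exact hred
    · push_neg at hred
      obtain ⟨i, j, hij, hj, hqi⟩ := hred
      have hqi' : q ≤ μ i := by omega
      have hj' : 1 ≤ μ j := Nat.one_le_iff_ne_zero.mpr hj
      have hij' : i ≠ j := ne_of_lt hij
      set A : Fin (n + 1) →₀ ℕ := Finsupp.single i q + Finsupp.single j 1 with hA
      set B : Fin (n + 1) →₀ ℕ := Finsupp.single i 1 + Finsupp.single j q with hB
      set ν : Fin (n + 1) →₀ ℕ := μ - A with hν
      have hνA : ν + A = μ := by
        ext l
        rw [Finsupp.add_apply, hν, Finsupp.tsub_apply, hA]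
        rcases eq_or_ne i l with rfl | h1
        · rcases eq_or_ne j i with h2 | h2
          · exact absurd h2.symm hij'
          · simp only [Finsupp.add_apply, Finsupp.single_eq_same, Finsupp.single_eq_of_ne' h2]
            omega
        · rcases eq_or_ne j l with rfl | h2
          · simp only [Finsupp.add_apply, Finsupp.single_eq_same, Finsupp.single_eq_of_ne' h1]
            omega
          · simp only [Finsupp.add_apply, Finsupp.single_eq_of_ne' h1, Finsupp.single_eq_of_ne' h2]
            omega
      set μ' : Fin (n + 1) →₀ ℕ := ν + B with hμ'
      -- measure decreases
      have hmsr : msr n μ' < msr n μ := by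
        have hijn : (i : ℕ) < (j : ℕ) := hij
        have hjn : (j : ℕ) ≤ n := Fin.is_le j
        set a := n - (i : ℕ) with ha'
        set b := n - (j : ℕ) with hb'
        set c := a - b with hc'
        have hab : b < a := by omega
        have hc1 : 1 ≤ c := by omega
        have hac : a = b + c := by omega
        have h1 : q * a = q * b + q * c := by rw [hac, Nat.mul_add]
        have h2 : c < q * c := by
          have := Nat.mul_lt_mul_of_pos_right (show 1 < q by omega) (show 0 < c by omega)
          rwa [one_mul] at this
        have haux : 1 * a + q * b < q * a + 1 * b := by
          rw [one_mul, one_mul]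
          linarith
        calc msr n μ' = msr n ν + (1 * a + q * b) := by
              rw [hμ', msr_add, hB, msr_add, msr_single, msr_single]
          _ < msr n ν + (q * a + 1 * b) := Nat.add_lt_add_left haux _
          _ = msr n μ := by
              rw [← hνA, msr_add, hA, msr_add, msr_single, msr_single]
      obtain ⟨g, hg1, hg2, hg3⟩ := ihN μ' (by omega)
      refine ⟨g, ?_, hg2, ?_⟩
      · have : Finsupp.degree μ' = Finsupp.degree μ := by
          rw [hμ', ← hνA, hA, hB, deg_add, deg_add, deg_add, deg_add,
            deg_single, deg_single, deg_single, deg_single]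
          omega
        rwa [this] at hg1
      · have hmono : monomial μ (1 : k) - monomial μ' (1 : k)
            = monomial ν (1 : k) * (X i ^ q * X j - X i * X j ^ q) := by
          rw [mul_sub]
          congr 1
          · rw [X_pow_eq_monomial, show (X j : MvPolynomial (Fin (n+1)) k) = X j ^ 1 from
              (pow_one _).symm, X_pow_eq_monomial, monomial_mul, monomial_mul, one_mul, one_mul,
              ← hA, hνA]
          · rw [show (X i : MvPolynomial (Fin (n+1)) k) = X i ^ 1 from (pow_one _).symm,
              X_pow_eq_monomial, X_pow_eq_monomial, monomial_mul, monomial_mul, one_mul, one_mul,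
              ← hB, ← hμ']
        have hmem : monomial μ (1 : k) - monomial μ' (1 : k) ∈
            Ideal.span {p : MvPolynomial (Fin (n + 1)) k |
              ∃ i j : Fin (n + 1), i < j ∧ p = X i ^ q * X j - X i * X j ^ q} := by
          rw [hmono]
          exact Ideal.mul_mem_left _ _ (Ideal.subset_span ⟨i, j, hij, rfl⟩)
        have := Ideal.add_mem _ hmem hg3
        rwa [sub_add_sub_cancel] at this

lemma exists_red {k : Type*} [Field k] (q n d : ℕ) (hq : 2 ≤ q)
    (f : MvPolynomial (Fin (n + 1)) k) (hf : f.IsHomogeneous d) :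
    ∃ g : MvPolynomial (Fin (n + 1)) k,
      g.IsHomogeneous d ∧
      (∀ ν ∈ g.support, ∀ i j : Fin (n + 1), i < j → ν j ≠ 0 → ν i ≤ q - 1) ∧
      f - g ∈ Ideal.span {p : MvPolynomial (Fin (n + 1)) k |
        ∃ i j : Fin (n + 1), i < j ∧ p = X i ^ q * X j - X i * X j ^ q} := by
  classical
  have H : ∀ μ : Fin (n + 1) →₀ ℕ,
      ∃ g : MvPolynomial (Fin (n + 1)) k,
        g.IsHomogeneous (Finsupp.degree μ) ∧
        (∀ ν ∈ g.support, ∀ i j : Fin (n + 1), i < j → ν j ≠ 0 → ν i ≤ q - 1) ∧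
        (monomial μ (1 : k)) - g ∈ Ideal.span {p : MvPolynomial (Fin (n + 1)) k |
          ∃ i j : Fin (n + 1), i < j ∧ p = X i ^ q * X j - X i * X j ^ q} :=
    fun μ => monomial_reduce q n hq (msr n μ + 1) μ (by omega)
  choose G h1 h2 h3 using H
  refine ⟨∑ μ ∈ f.support, C (coeff μ f) * G μ, ?_, ?_, ?_⟩
  · apply IsHomogeneous.sum
    intro μ hμ
    have hdeg : Finsupp.degree μ = d := isHom_iff.mp hf μ hμ
    have := (isHomogeneous_C _ (coeff μ f)).mul (hdeg ▸ h1 μ)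
    rwa [zero_add] at this
  · intro ξ hξ i j hij hj
    obtain ⟨μ, hμf, hξ'⟩ := Finset.mem_biUnion.mp (MvPolynomial.support_sum hξ)
    have hsub : ξ ∈ (G μ).support := by
      have : (C (coeff μ f) * G μ).support ⊆ (G μ).support := by
        rw [C_mul']
        exact support_smul
      exact this hξ'
    exact h2 μ ξ hsub i j hij hj
  · have key : ∑ μ ∈ f.support, C (coeff μ f) * (monomial μ 1 - G μ)
        = f - ∑ μ ∈ f.support, C (coeff μ f) * G μ := by
      have hrw : ∀ μ ∈ f.support, C (coeff μ f) * (monomial μ 1 - G μ)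
          = monomial μ (coeff μ f) - C (coeff μ f) * G μ := by
        intro μ _
        rw [mul_sub, C_mul_monomial, mul_one]
      rw [Finset.sum_congr rfl hrw, Finset.sum_sub_distrib, support_sum_monomial_coeff]
    rw [← key]
    exact Ideal.sum_mem _ fun μ _ => Ideal.mul_mem_left _ _ (h3 μ)

end FermatAux

open FermatAux

/-- Every homogeneous polynomial `f ∈ k[X_0,…,X_n]` of degree `d` can be written
uniquely as `f = g + γ` where `g` is a `k`-linear combination of projectively reduced
monomials of degree `d` and `γ` is a homogeneous polynomial of degree `d` lying in the
ideal `Γ*_q(k)` generated by the Fermat polynomials `X_i^q X_j - X_i X_j^q` (`i < j`);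
i.e. `𝒮_d = 𝔯_d ⊕ Γ*_q(k)_d`. -/
theorem existsUnique_projectivelyReduced_add_fermat
    (q n d : ℕ) (hq : IsPrimePow q) (k : Type*) [Field k]
    (Fq : Subfield k) (hcard : Nat.card Fq = q)
    (f : MvPolynomial (Fin (n + 1)) k)
    (hhom : f.IsHomogeneous d) :
    ∃! p : MvPolynomial (Fin (n + 1)) k × MvPolynomial (Fin (n + 1)) k,
      p.1.IsHomogeneous d ∧
      (∀ μ ∈ p.1.support, ∀ i j : Fin (n + 1), i < j → μ j ≠ 0 → μ i ≤ q - 1) ∧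
      p.2.IsHomogeneous d ∧
      p.2 ∈ Ideal.span {g : MvPolynomial (Fin (n + 1)) k |
        ∃ i j : Fin (n + 1), i < j ∧ g = X i ^ q * X j - X i * X j ^ q} ∧
      f = p.1 + p.2 := by
  classical
  have hq2 : 2 ≤ q := hq.two_le
  have hfin : Finite Fq := Nat.finite_of_card_ne_zero (by omega)
  letI : Fintype Fq := Fintype.ofFinite Fq
  have hcard' : Fintype.card Fq = q := by rw [← Nat.card_eq_fintype_card, hcard]
  have hpow : ∀ t : Fq, (t : k) ^ q = (t : k) := by
    intro t
    have h1 : t ^ q = t := by rw [← hcard']; exact FiniteField.pow_card t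
    calc ((t : k)) ^ q = ((t ^ q : Fq) : k) := by norm_cast
      _ = (t : k) := by rw [h1]
  obtain ⟨g, hg1, hg2, hg3⟩ := exists_red q n d hq2 f hhom
  refine ⟨(g, f - g), ⟨hg1, hg2, hhom.sub hg1, hg3, by ring⟩, ?_⟩
  rintro ⟨g', γ'⟩ ⟨hp1, hp2, hp3, hp4, hp5⟩
  have hmem : g' - g ∈ Ideal.span {p : MvPolynomial (Fin (n + 1)) k |
      ∃ i j : Fin (n + 1), i < j ∧ p = X i ^ q * X j - X i * X j ^ q} := by
    have h1 : g' - g = (f - g) - γ' := by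
      rw [hp5]
      ring
    rw [h1]
    exact sub_mem hg3 hp4
  have hvan : ∀ x : Fin (n + 1) → Fq, eval (fun i => (x i : k)) (g' - g) = 0 := by
    intro x
    have hker : Ideal.span {p : MvPolynomial (Fin (n + 1)) k |
        ∃ i j : Fin (n + 1), i < j ∧ p = X i ^ q * X j - X i * X j ^ q} ≤
        RingHom.ker (eval (fun i => ((x i : k)))) := by
      rw [Ideal.span_le]
      rintro p ⟨i, j, hij, rfl⟩
      simp only [SetLike.mem_coe, RingHom.mem_ker, map_sub, map_mul, map_pow, eval_X]
      rw [hpow (x i), hpow (x j)]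
      ring
    exact hker hmem
  have hredsub : ∀ μ ∈ (g' - g).support, ∀ i j : Fin (n + 1), i < j → μ j ≠ 0 → μ i ≤ q - 1 := by
    intro μ hμ
    rcases Finset.mem_union.mp (MvPolynomial.support_sub _ g' g hμ) with h | h
    · exact hp2 μ h
    · exact hg2 μ h
  have h0 : g' - g = 0 :=
    red_vanish q hq2 Fq hcard' hpow (n + 1) d (g' - g) (hp1.sub hg1) hredsub hvan
  have hgg : g' = g := by rwa [sub_eq_zero] at h0
  have hγ : γ' = f - g := by
    rw [hp5, hgg]
    ring
  exact Prod.ext hgg hγ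
end

section
/- Let q be a prime power and let k be a field containing the finite field F_q. A homogeneous polynomial f ∈ k[X_0, X_1, …, X_n] satisfies f(a) = 0 for every a ∈ F_q^{n+1} ∖ {0} if and only if f belongs to the ideal Γ*_q(k) generated by the Fermat polynomials X_i^q X_j − X_i X_j^q for 0 ≤ i < j ≤ n. Consequently, the vanishing ideal of P^n(F_q), i.e., the ideal of k[X_0, …, X_n] generated by all homogeneous polynomials vanishing at every point of P^n(F_q), equals Γ*_q(k). -/
open MvPolynomial Finset

universe u v

namespace FermatIdealAux

/-- Grid vanishing lemma over an arbitrary-universe finite field. -/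
lemma grid_vanish {K : Type u} [Field K] [Fintype K] {N : ℕ} (p : MvPolynomial (Fin N) K)
    (h : ∀ v : Fin N → K, eval v p = 0)
    (hdeg : ∀ s ∈ p.support, ∀ i, s i ≤ Fintype.card K - 1) : p = 0 := by
  classical
  let e : Fin N ≃ ULift.{u} (Fin N) := Equiv.ulift.symm
  have h0 : rename e p = 0 := by
    apply eq_zero_of_eval_eq_zero
    · intro v; rw [eval_rename]; exact h _
    · rw [mem_restrictDegree]
      intro s hs i
      rw [support_rename_of_injective e.injective] at hs
      obtain ⟨s₀, hs₀, rfl⟩ := Finset.mem_image.mp hs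
      have : i = e (e.symm i) := (e.apply_symm_apply i).symm
      rw [this, Finsupp.mapDomain_apply e.injective]
      exact hdeg s₀ hs₀ _
  have := congrArg (rename (e.symm : ULift.{u} (Fin N) → Fin N)) h0
  rwa [rename_rename, map_zero, show (e.symm : ULift.{u} (Fin N) → Fin N) ∘ e = id from
    funext fun x => e.symm_apply_apply x, rename_id] at this

variable {q n : ℕ} {k : Type v} [Field k] (Fq : Subfield k) [Fintype Fq]

local notation "σ" => Fin (n + 1)

/-- The Fermat generating set. -/
def S (q n : ℕ) (k : Type v) [Field k] : Set (MvPolynomial (Fin (n+1)) k) :=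
  {p | ∃ i j : Fin (n + 1), i < j ∧ p = X i ^ q * X j - X i * X j ^ q}

lemma easy_direction (hcard : Fintype.card Fq = q)
    {f : MvPolynomial σ k} (hf : f ∈ Ideal.span (S q n k)) :
    ∀ a : σ → Fq, eval (fun i => (a i : k)) f = 0 := by
  intro a
  induction hf using Submodule.span_induction with
  | mem p hp =>
      obtain ⟨i, j, -, rfl⟩ := hp
      have hi' : (a i) ^ q = a i := by rw [← hcard]; exact FiniteField.pow_card _
      have hj' : (a j) ^ q = a j := by rw [← hcard]; exact FiniteField.pow_card _
      have hi : ((a i : k)) ^ q = (a i : k) := mod_cast hi'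
      have hj : ((a j : k)) ^ q = (a j : k) := mod_cast hj'
      simp [hi, hj, mul_comm]
  | zero => simp
  | add p r _ _ hp hr => simp [hp, hr]
  | smul c p _ hp => simp [hp]

/-- `m` is in normal form: every variable below another occurring variable has exponent `≤ q-1`. -/
def Normal (q : ℕ) {n : ℕ} (m : Fin (n+1) →₀ ℕ) : Prop :=
  ∀ i j : Fin (n+1), i < j → m j ≠ 0 → m i ≤ q - 1

lemma sum_mul_single (w : Fin (n+1) → ℕ) (i : σ) (c : ℕ) :
    ∑ x : σ, (Finsupp.single i c) x * w x = c * w i := by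
  simp [Finsupp.single_apply, ite_mul]

lemma move_mem (hq2 : 2 ≤ q) (c : k) (m : σ →₀ ℕ) (i j : σ) (hij : i < j)
    (hi : q ≤ m i) (hj : 1 ≤ m j) :
    (monomial m c : MvPolynomial σ k) -
      monomial (m - Finsupp.single i (q-1) + Finsupp.single j (q-1)) c ∈
        Ideal.span (S q n k) := by
  have hne : i ≠ j := hij.ne
  set w : σ →₀ ℕ := m - Finsupp.single i q - Finsupp.single j 1 with hw
  have h1 : w + (Finsupp.single i q + Finsupp.single j 1) = m := by
    ext x
    simp only [hw, Finsupp.add_apply, Finsupp.tsub_apply, Finsupp.single_apply]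
    by_cases hix : i = x <;> by_cases hjx : j = x <;> simp_all <;> omega
  have h2 : w + (Finsupp.single i 1 + Finsupp.single j q) =
      m - Finsupp.single i (q-1) + Finsupp.single j (q-1) := by
    ext x
    simp only [hw, Finsupp.add_apply, Finsupp.tsub_apply, Finsupp.single_apply]
    by_cases hix : i = x <;> by_cases hjx : j = x <;> simp_all <;> omega
  have key : (monomial m c : MvPolynomial σ k) -
      monomial (m - Finsupp.single i (q-1) + Finsupp.single j (q-1)) c
      = monomial w c * (X i ^ q * X j - X i * X j ^ q) := by
    rw [mul_sub, ← pow_one (X j), ← pow_one (X i), ← pow_mul, one_mul, ← pow_mul, one_mul]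
    simp only [X_pow_eq_monomial, monomial_mul, one_mul, mul_one, h1, h2]
  rw [key]
  exact Ideal.mul_mem_left _ _ (Ideal.subset_span ⟨i, j, hij, rfl⟩)

lemma normalize (hq2 : 2 ≤ q) (m : σ →₀ ℕ) :
    ∃ m' : σ →₀ ℕ, (∑ x : σ, m' x) = (∑ x : σ, m x) ∧ Normal q m' ∧
      ∀ c : k, (monomial m c : MvPolynomial σ k) - monomial m' c ∈ Ideal.span (S q n k) := by
  set μ : (σ →₀ ℕ) → ℕ := fun m => ∑ x : σ, m x * (n + 1 - x.val) with hμ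
  suffices H : ∀ N (m : σ →₀ ℕ), μ m = N →
      ∃ m' : σ →₀ ℕ, (∑ x : σ, m' x) = (∑ x : σ, m x) ∧ Normal q m' ∧
        ∀ c : k, (monomial m c : MvPolynomial σ k) - monomial m' c ∈ Ideal.span (S q n k) from
    H _ m rfl
  intro N
  induction N using Nat.strong_induction_on with
  | _ N IH =>
    intro m hm
    by_cases hnorm : Normal q m
    · exact ⟨m, rfl, hnorm, fun c => by simp⟩
    · rw [Normal] at hnorm
      push_neg at hnorm
      obtain ⟨i, j, hij, hj, hi⟩ := hnorm
      have hiq : q ≤ m i := by omega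
      have hne : i ≠ j := hij.ne
      set m₂ : σ →₀ ℕ := m - Finsupp.single i (q-1) + Finsupp.single j (q-1) with hm₂
      have E : m₂ + Finsupp.single i (q-1) = m + Finsupp.single j (q-1) := by
        ext x
        simp only [hm₂, Finsupp.add_apply, Finsupp.tsub_apply, Finsupp.single_apply]
        by_cases hix : i = x <;> by_cases hjx : j = x <;> simp_all <;> omega
      have Esum : ∀ w : σ → ℕ,
          (∑ x : σ, m₂ x * w x) + (q-1) * w i = (∑ x : σ, m x * w x) + (q-1) * w j := by
        intro w
        have := congrArg (fun f : σ →₀ ℕ => ∑ x : σ, f x * w x) E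
        simp only [Finsupp.add_apply, add_mul, Finset.sum_add_distrib, sum_mul_single] at this
        exact this
      have hdeg : (∑ x : σ, m₂ x) = ∑ x : σ, m x := by
        have := Esum (fun _ => 1)
        simpa using this
      have hμlt : μ m₂ < μ m := by
        have h1 := Esum (fun x => n + 1 - x.val)
        have h2 : (q-1) * (n + 1 - j.val) < (q-1) * (n + 1 - i.val) := by
          exact Nat.mul_lt_mul_of_pos_left (by omega) (by omega)
        simp only [hμ]
        omega
      obtain ⟨m', h1, h2, h3⟩ := IH (μ m₂) (hm ▸ hμlt) m₂ rfl
      refine ⟨m', h1.trans hdeg, h2, fun c => ?_⟩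
      have h4 := h3 c
      have h5 : (monomial m c : MvPolynomial σ k) - monomial m' c
          = ((monomial m c : MvPolynomial σ k) - monomial m₂ c)
            + ((monomial m₂ c : MvPolynomial σ k) - monomial m' c) := by ring
      rw [h5]
      exact add_mem (move_mem hq2 c m i j hij hiq (by omega)) h4

/-- Reduction of an exponent modulo `q - 1`, keeping positivity. -/
def redE (q e : ℕ) : ℕ := if e = 0 then 0 else (e - 1) % (q - 1) + 1

lemma redE_zero : redE q 0 = 0 := by simp [redE]

lemma redE_le (hq2 : 2 ≤ q) (e : ℕ) : redE q e ≤ q - 1 := by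
  unfold redE; split
  · omega
  · have := Nat.mod_lt (e-1) (y := q-1) (by omega); omega

lemma redE_eq_zero_iff (e : ℕ) : redE q e = 0 ↔ e = 0 := by unfold redE; split <;> omega

lemma redE_eq_self (h1 : 1 ≤ e) (h2 : e ≤ q-1) : redE q e = e := by
  unfold redE
  rw [if_neg (by omega), Nat.mod_eq_of_lt (by omega)]
  omega

lemma pow_redE (hq2 : 2 ≤ q) (hcard : Fintype.card Fq = q) (x : Fq) (e : ℕ) :
    (x : k) ^ e = (x : k) ^ redE q e := by
  rcases eq_or_ne e 0 with rfl | he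
  · simp [redE]
  rcases eq_or_ne x 0 with rfl | hx
  · have h1 : redE q e ≠ 0 := fun hc => he ((redE_eq_zero_iff e).mp hc)
    have : ((0 : Fq) : k) = 0 := by push_cast; ring
    rw [this, zero_pow he, zero_pow h1]
  · have hu : x ^ (q - 1) = 1 := by
      rw [← hcard]; exact FiniteField.pow_card_sub_one_eq_one x hx
    have hu' : (x : k) ^ (q-1) = 1 := mod_cast hu
    have hdecomp : e = (q-1) * ((e-1)/(q-1)) + redE q e := by
      unfold redE
      rw [if_neg he]
      have := Nat.div_add_mod (e-1) (q-1); omega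
    calc (x:k)^e = ((x:k)^(q-1))^((e-1)/(q-1)) * (x:k)^(redE q e) := by
          rw [← pow_mul, ← pow_add, ← hdecomp]
      _ = (x:k)^(redE q e) := by rw [hu', one_pow, one_mul]

/-- Coordinatewise reduction of an exponent vector. -/
noncomputable def Rm (q : ℕ) {n : ℕ} (m : Fin (n+1) →₀ ℕ) : Fin (n+1) →₀ ℕ :=
  Finsupp.mapRange (redE q) redE_zero m

lemma Rm_apply (m : σ →₀ ℕ) (x : σ) : Rm q m x = redE q (m x) := Finsupp.mapRange_apply

/-- `Rm` is injective on normal exponent vectors of equal total degree. -/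
lemma Rm_inj (hq2 : 2 ≤ q) {m₁ m₂ : σ →₀ ℕ} (h₁ : Normal q m₁) (h₂ : Normal q m₂)
    (hsum : (∑ x : σ, m₁ x) = ∑ x : σ, m₂ x) (hR : Rm q m₁ = Rm q m₂) : m₁ = m₂ := by
  classical
  have hRx : ∀ x, redE q (m₁ x) = redE q (m₂ x) := by
    intro x; rw [← Rm_apply, ← Rm_apply, hR]
  have hzero : ∀ x, m₁ x = 0 ↔ m₂ x = 0 := by
    intro x
    rw [← redE_eq_zero_iff (q := q) (m₁ x), hRx x, redE_eq_zero_iff]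
  have hsupp : m₁.support = m₂.support := by
    ext x
    simp only [Finsupp.mem_support_iff]
    exact not_congr (hzero x)
  rcases Finset.eq_empty_or_nonempty m₁.support with hemp | hne
  · ext x
    have hx1 : m₁ x = 0 := Finsupp.notMem_support_iff.mp (by simp [hemp])
    have hx2 : m₂ x = 0 := Finsupp.notMem_support_iff.mp (by simp [← hsupp, hemp])
    rw [hx1, hx2]
  · set M := m₁.support.max' hne with hM
    have hM1 : m₁ M ≠ 0 := Finsupp.mem_support_iff.mp (m₁.support.max'_mem hne)
    have hM2 : m₂ M ≠ 0 := fun hc => hM1 ((hzero M).mpr hc)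
    have hoff : ∀ x, x ≠ M → m₁ x = m₂ x := by
      intro x hx
      by_cases hx1 : m₁ x = 0
      · rw [hx1, ((hzero x).mp hx1).symm]
      · have hxmem : x ∈ m₁.support := Finsupp.mem_support_iff.mpr hx1
        have hxM : x < M := lt_of_le_of_ne (m₁.support.le_max' x hxmem) hx
        have hb1 : m₁ x ≤ q - 1 := h₁ x M hxM hM1
        have hb2 : m₂ x ≤ q - 1 := h₂ x M hxM hM2
        have hx2 : m₂ x ≠ 0 := fun hc => hx1 ((hzero x).mpr hc)
        rw [← redE_eq_self (by omega) hb1, hRx x, redE_eq_self (by omega) hb2]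
    have hMM : m₁ M = m₂ M := by
      have e1 : (∑ x : σ, m₁ x) = m₁ M + ∑ x ∈ Finset.univ.erase M, m₁ x :=
        (Finset.add_sum_erase _ _ (mem_univ M)).symm
      have e2 : (∑ x : σ, m₂ x) = m₂ M + ∑ x ∈ Finset.univ.erase M, m₂ x :=
        (Finset.add_sum_erase _ _ (mem_univ M)).symm
      have e3 : (∑ x ∈ Finset.univ.erase M, m₁ x) = ∑ x ∈ Finset.univ.erase M, m₂ x :=
        Finset.sum_congr rfl fun x hx => hoff x (Finset.ne_of_mem_erase hx)
      omega
    ext x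
    by_cases hx : x = M
    · rw [hx]; exact hMM
    · exact hoff x hx

/-- A polynomial over `k` with exponents `≤ q - 1` vanishing at all `F_q`-points is zero. -/
lemma grid_vanish_k (hq2 : 2 ≤ q) (hcard : Fintype.card Fq = q)
    (G : MvPolynomial σ k) (hdeg : ∀ s ∈ G.support, ∀ i, s i ≤ q - 1)
    (hv : ∀ v : σ → Fq, eval (fun i => (v i : k)) G = 0) : G = 0 := by
  classical
  let b := Module.Basis.ofVectorSpace Fq k
  have key : ∀ β, (∑ m ∈ G.support, monomial m (b.repr (coeff m G) β) : MvPolynomial σ Fq)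
      = 0 := by
    intro β
    set Gβ : MvPolynomial σ Fq := ∑ m ∈ G.support, monomial m (b.repr (coeff m G) β) with hGβ
    have hcoeff : ∀ m, coeff m Gβ = b.repr (coeff m G) β := by
      intro m
      rw [hGβ, coeff_sum]
      simp only [coeff_monomial]
      rw [Finset.sum_ite_eq' G.support m (fun m' => b.repr (coeff m' G) β)]
      split
      · rfl
      · rw [notMem_support_iff.mp (by assumption), map_zero, Finsupp.zero_apply]
    have hsupp : Gβ.support ⊆ G.support := by
      intro m hm
      rw [mem_support_iff] at hm ⊢
      intro hc
      exact hm (by rw [hcoeff, hc, map_zero, Finsupp.zero_apply])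
    apply grid_vanish
    · intro v
      have heval : eval v Gβ = b.repr (eval (fun i => (v i : k)) G) β := by
        rw [eval_eq, eval_eq, map_sum, Finsupp.finset_sum_apply]
        have hterm : ∀ m ∈ G.support,
            (b.repr (coeff m G * ∏ i ∈ m.support, ((v i : k)) ^ m i)) β
              = coeff m Gβ * ∏ i ∈ m.support, (v i) ^ m i := by
          intro m _
          set P : Fq := ∏ i ∈ m.support, (v i) ^ m i with hP
          have hprod : (∏ i ∈ m.support, ((v i : k)) ^ m i) = (P : k) := by
            rw [hP]; push_cast; rfl
          have hsmul : coeff m G * (P : k)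
              = HSMul.hSMul (α := ↥Fq) (β := k) (γ := k) P (coeff m G) := by
            rw [Subfield.smul_def, smul_eq_mul]; ring
          rw [hprod, hsmul, map_smul, Finsupp.smul_apply, smul_eq_mul, hcoeff, mul_comm]
        rw [Finset.sum_congr rfl hterm]
        exact Finset.sum_subset hsupp (fun m _ hm => by
          rw [notMem_support_iff.mp hm, zero_mul])
      rw [heval, hv v, map_zero, Finsupp.zero_apply]
    · intro s hs i
      rw [hcard]
      exact hdeg s (hsupp hs) i
  ext m
  rw [coeff_zero]
  by_cases hm : m ∈ G.support
  · have h1 : ∀ β, b.repr (coeff m G) β = 0 := by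
      intro β
      have := key β
      have h2 := congrArg (coeff m) this
      rw [coeff_sum, coeff_zero] at h2
      simp only [coeff_monomial] at h2
      rw [Finset.sum_ite_eq' G.support m (fun m' => b.repr (coeff m' G) β), if_pos hm] at h2
      exact h2
    have h3 : b.repr (coeff m G) = 0 := Finsupp.ext h1
    exact b.repr.map_eq_zero_iff.mp h3
  · exact notMem_support_iff.mp hm

end FermatIdealAux

namespace Part4
open FermatIdealAux
variable {q n : ℕ} {k : Type v} [Field k] (Fq : Subfield k) [Fintype Fq]
local notation "σ" => Fin (n + 1)

lemma degree_univ (m : σ →₀ ℕ) : Finsupp.degree m = ∑ x : σ, m x :=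
  Finset.sum_subset (Finset.subset_univ _)
    (fun x _ hx => Finsupp.notMem_support_iff.mp hx)

lemma homog_degree {f : MvPolynomial σ k} {d : ℕ} (hf : f.IsHomogeneous d) :
    ∀ m ∈ f.support, (∑ x : σ, m x) = d := by
  intro m hm
  have := hf (mem_support_iff.mp hm)
  change (Finsupp.weight (fun _ => (1 : ℕ))) m = d at this
  rw [← Finsupp.degree_eq_weight_one] at this
  rw [← degree_univ]
  exact this

lemma hard_direction (hq2 : 2 ≤ q) (hcard : Fintype.card Fq = q)
    {f : MvPolynomial σ k} {d : ℕ} (hf : f.IsHomogeneous d)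
    (hv : ∀ a : σ → Fq, a ≠ 0 → eval (fun i => (a i : k)) f = 0) :
    f ∈ Ideal.span (S q n k) := by
  classical
  rcases Nat.eq_zero_or_pos d with rfl | hd
  · -- degree 0 : f is a constant, vanishing at a nonzero point forces f = 0
    have hfc : f = C (coeff 0 f) := by
      ext m
      rw [coeff_C]
      by_cases hm : m = 0
      · rw [hm, if_pos rfl]
      · rw [if_neg (Ne.symm hm)]
        by_contra hc
        have h0 := hf hc
        change (Finsupp.weight (fun _ => (1 : ℕ))) m = 0 at h0
        rw [← Finsupp.degree_eq_weight_one] at h0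
        exact hm (Finsupp.degree_eq_zero_iff m |>.mp h0)
    have hne : (fun i : σ => if i = 0 then (1 : Fq) else 0) ≠ 0 := by
      intro hc
      have := congrFun hc 0
      simp at this
    have := hv _ hne
    rw [hfc] at this ⊢
    rw [eval_C] at this
    rw [this, map_zero]
    exact zero_mem _
  · -- degree ≥ 1
    have H := fun m : σ →₀ ℕ => normalize (q := q) (n := n) (k := k) hq2 m
    choose N hNdeg hNnorm hNmem using H
    set g : MvPolynomial σ k := ∑ m ∈ f.support, monomial (N m) (coeff m f) with hg
    have hfg : f - g ∈ Ideal.span (S q n k) := by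
      have hsplit : f - g
          = ∑ m ∈ f.support, (monomial m (coeff m f) - monomial (N m) (coeff m f)) := by
        rw [Finset.sum_sub_distrib, ← hg, ← f.as_sum]
      rw [hsplit]
      exact sum_mem fun m hm => hNmem m _
    have hgvanish : ∀ a : σ → Fq, a ≠ 0 → eval (fun i => (a i : k)) g = 0 := by
      intro a ha
      have h2 := easy_direction Fq hcard hfg a
      rw [map_sub] at h2
      rw [hv a ha, zero_sub, neg_eq_zero] at h2
      exact h2
    -- each N m is nonzero, of total degree d
    have hNd : ∀ m ∈ f.support, (∑ x : σ, N m x) = d := fun m hm =>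
      (hNdeg m).trans (homog_degree hf m hm)
    have hNne : ∀ m ∈ f.support, N m ≠ 0 := by
      intro m hm hc
      have := hNd m hm
      rw [hc] at this
      simp at this
      omega
    set G : MvPolynomial σ k := ∑ m ∈ f.support, monomial (Rm q (N m)) (coeff m f) with hG
    -- coefficients of g and G
    have hgcoeff : ∀ w, coeff w g = ∑ m ∈ f.support, ite (N m = w) (coeff m f) 0 := by
      intro w
      rw [hg, coeff_sum]
      exact Finset.sum_congr rfl fun m _ => coeff_monomial w (N m) (coeff m f)
    have hGcoeff : ∀ w, coeff w G = ∑ m ∈ f.support, ite (Rm q (N m) = w) (coeff m f) 0 := by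
      intro w
      rw [hG, coeff_sum]
      exact Finset.sum_congr rfl fun m _ => coeff_monomial w (Rm q (N m)) (coeff m f)
    -- G agrees with g at all Fq-points
    have hGg : ∀ v : σ → Fq, eval (fun i => (v i : k)) G = eval (fun i => (v i : k)) g := by
      intro v
      rw [hg, hG, map_sum, map_sum]
      apply Finset.sum_congr rfl
      intro m _
      rw [eval_monomial, eval_monomial]
      congr 1
      rw [Finsupp.prod_fintype _ _ (fun i => pow_zero _),
        Finsupp.prod_fintype _ _ (fun i => pow_zero _)]
      apply Finset.prod_congr rfl
      intro x _
      rw [Rm_apply, ← pow_redE Fq hq2 hcard]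
    -- G vanishes at every Fq-point
    have hGvanish : ∀ v : σ → Fq, eval (fun i => (v i : k)) G = 0 := by
      intro v
      by_cases hv0 : v = 0
      · rw [hGg, hg]
        subst hv0
        have hzf : (fun i : σ => ((0 : Fq) : k)) = (fun _ : σ => (0 : k)) := by
          funext i; push_cast; ring
        simp only [Pi.zero_apply]
        rw [hzf, eval_zero', map_sum]
        apply Finset.sum_eq_zero
        intro m hm
        rw [constantCoeff_monomial, if_neg (hNne m hm)]
      · rw [hGg]
        exact hgvanish v hv0
    -- exponents of G are ≤ q - 1
    have hGdeg : ∀ s ∈ G.support, ∀ i : σ, s i ≤ q - 1 := by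
      intro s hs i
      have hcs := mem_support_iff.mp hs
      rw [hGcoeff] at hcs
      have : ∃ m ∈ f.support, Rm q (N m) = s := by
        by_contra hc
        push_neg at hc
        exact hcs (Finset.sum_eq_zero fun m hm => if_neg (hc m hm))
      obtain ⟨m, -, rfl⟩ := this
      rw [Rm_apply]
      exact redE_le hq2 _
    have hG0 : G = 0 := grid_vanish_k Fq hq2 hcard G hGdeg hGvanish
    -- conclude g = 0
    have hg0 : g = 0 := by
      ext w
      rw [coeff_zero, hgcoeff]
      by_cases hw : ∃ m₀ ∈ f.support, N m₀ = w
      · obtain ⟨m₀, hm₀, hNm₀⟩ := hw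
        have hGc : (∑ m ∈ f.support, ite (Rm q (N m) = Rm q w) (coeff m f) 0) = 0 := by
          rw [← hGcoeff, hG0, coeff_zero]
        refine Eq.trans (Finset.sum_congr rfl ?_) hGc
        intro m hm
        by_cases h : N m = w
        · rw [if_pos h, if_pos (by rw [h])]
        · have hneg : ¬(Rm q (N m) = Rm q w) := fun hc => h (by
            rw [← hNm₀]
            exact Rm_inj hq2 (hNnorm m) (hNnorm m₀)
              ((hNd m hm).trans (hNd m₀ hm₀).symm) (by rw [hc, hNm₀]))
          rw [if_neg h, if_neg hneg]
      · apply Finset.sum_eq_zero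
        intro m hm
        exact if_neg fun hc => hw ⟨m, hm, hc⟩
    rw [hg0, sub_zero] at hfg
    exact hfg

end Part4



open MvPolynomial

/-- A homogeneous polynomial `f ∈ k[X_0,…,X_n]` vanishes at every point of
`F_q^{n+1} \ {0}` if and only if it lies in the ideal `Γ*_q(k)` generated by the Fermat
polynomials `X_i^q X_j - X_i X_j^q` for `i < j`. Consequently, the vanishing ideal of
`P^n(F_q)`, i.e. the ideal generated by all homogeneous polynomials vanishing on
`P^n(F_q)`, equals `Γ*_q(k)`. -/
theorem vanishingIdeal_projectiveSpace_eq_fermatIdeal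
    (q n : ℕ) (hq : IsPrimePow q) (k : Type*) [Field k]
    (Fq : Subfield k) (hcard : Nat.card Fq = q) :
    (∀ f : MvPolynomial (Fin (n + 1)) k, (∃ d, f.IsHomogeneous d) →
      ((∀ a : Fin (n + 1) → Fq, a ≠ 0 →
          MvPolynomial.eval (fun i => (a i : k)) f = 0) ↔
        f ∈ Ideal.span {p : MvPolynomial (Fin (n + 1)) k |
          ∃ i j : Fin (n + 1), i < j ∧ p = X i ^ q * X j - X i * X j ^ q})) ∧
    Ideal.span {f : MvPolynomial (Fin (n + 1)) k |
        (∃ d, f.IsHomogeneous d) ∧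
        ∀ a : Fin (n + 1) → Fq, a ≠ 0 →
          MvPolynomial.eval (fun i => (a i : k)) f = 0} =
      Ideal.span {p : MvPolynomial (Fin (n + 1)) k |
        ∃ i j : Fin (n + 1), i < j ∧ p = X i ^ q * X j - X i * X j ^ q} := by
  have hq2 : 2 ≤ q := hq.two_le
  have hfin : Finite Fq := Nat.finite_of_card_ne_zero (by omega)
  letI : Fintype Fq := Fintype.ofFinite Fq
  have hcard' : Fintype.card Fq = q := by rw [← Nat.card_eq_fintype_card, hcard]
  have hSeq : {p : MvPolynomial (Fin (n + 1)) k |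
      ∃ i j : Fin (n + 1), i < j ∧ p = X i ^ q * X j - X i * X j ^ q} = FermatIdealAux.S q n k := rfl
  rw [hSeq]
  constructor
  · rintro f ⟨d, hd⟩
    constructor
    · intro hvan
      exact Part4.hard_direction Fq hq2 hcard' hd hvan
    · intro hmem a _
      exact FermatIdealAux.easy_direction Fq hcard' hmem a
  · apply le_antisymm
    · rw [Ideal.span_le]
      rintro f ⟨⟨d, hd⟩, hvan⟩
      exact Part4.hard_direction Fq hq2 hcard' hd hvan
    · apply Ideal.span_mono
      rintro p ⟨i, j, hij, rfl⟩
      refine ⟨⟨q + 1, ?_⟩, ?_⟩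
      · have h1 : (X (R := k) i ^ q * X j).IsHomogeneous (q + 1) := by
          have := ((isHomogeneous_X k i).pow q).mul (isHomogeneous_X k j)
          simpa using this
        have h2 : (X (R := k) i * X j ^ q).IsHomogeneous (q + 1) := by
          have := (isHomogeneous_X k i).mul ((isHomogeneous_X k j).pow q)
          simpa [add_comm] using this
        exact h1.sub h2
      · intro a _
        exact FermatIdealAux.easy_direction Fq hcard' (Ideal.subset_span ⟨i, j, hij, rfl⟩) a
end

section
/- Let q be a prime power, let k be a field containing the finite field F_q, and let f(X_0, X_1) = X_0^q X_1 − X_0 X_1^q + X_0^{q+1} ∈ k[X_0, X_1]. Then the principal ideal ⟨f⟩ of k[X_0, X_1] is a radical ideal. -/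
open MvPolynomial

set_option maxHeartbeats 1600000 in
/-- For `f(X_0, X_1) = X_0^q X_1 - X_0 X_1^q + X_0^{q+1} ∈ k[X_0, X_1]`, the principal
ideal `⟨f⟩` is a radical ideal. -/
theorem principal_ideal_example_isRadical
    (q : ℕ) (hq : IsPrimePow q) (k : Type*) [Field k]
    (Fq : Subfield k) (hcard : Nat.card Fq = q) :
    (Ideal.span {(X 0 ^ q * X 1 - X 0 * X 1 ^ q + X 0 ^ (q + 1) :
      MvPolynomial (Fin 2) k)}).IsRadical := by
  -- the characteristic kills `q`
  have hqk : (q : k) = 0 := by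
    have hfin : Finite Fq := Nat.finite_of_card_ne_zero (by rw [hcard]; exact hq.pos.ne')
    have : Fintype Fq := Fintype.ofFinite Fq
    have h0 : ((q : ℕ) : Fq) = 0 := by
      rw [← hcard, Nat.card_eq_fintype_card]; exact Nat.cast_card_eq_zero Fq
    have : ((((q : ℕ) : Fq) : k)) = 0 := by rw [h0]; simp
    simpa using this
  obtain ⟨m, rfl⟩ : ∃ m, q = m + 2 := by
    obtain ⟨p, n, hp, hn, rfl⟩ := hq
    have h2 : 2 ≤ p := hp.nat_prime.two_le
    have : 2 ≤ p ^ n := le_trans h2 (Nat.le_self_pow hn.ne' p)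
    exact ⟨p ^ n - 2, by omega⟩
  rw [← isRadical_iff_span_singleton]
  set R := MvPolynomial (Fin 1) k with hR
  set e := finSuccEquiv k 1 with he
  set y : R := X 0 with hy
  set g : Polynomial R := Polynomial.X ^ (m + 1) * Polynomial.C y + Polynomial.X ^ (m + 2)
    - Polynomial.C y ^ (m + 2) with hg
  -- cast facts in `Polynomial R`
  have hq0R : ((m + 2 : ℕ) : R) = 0 := by
    rw [← map_natCast (algebraMap k R) (m + 2), hqk, map_zero]
  have hm1R : ((m + 1 : ℕ) : R) = -1 := by
    have h := hq0R
    push_cast at h ⊢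
    linear_combination h
  have hy0 : y ≠ 0 := MvPolynomial.X_ne_zero 0
  -- X does not divide g
  have hco0 : g.coeff 0 = -(y ^ (m + 2)) := by
    rw [hg]
    simp only [Polynomial.coeff_sub, Polynomial.coeff_add, ← Polynomial.C_pow,
      Polynomial.coeff_mul_C, Polynomial.coeff_X_pow, Polynomial.coeff_C, if_pos rfl]
    simp
  have hXg : ¬ (Polynomial.X ∣ g) := by
    rw [Polynomial.X_dvd_iff, hco0]
    simpa using pow_ne_zero (m + 2) hy0
  have hg0 : g ≠ 0 := fun h => hXg (h ▸ dvd_zero _)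
  -- derivative of g
  have hd : Polynomial.derivative g = -(Polynomial.X ^ m * Polynomial.C y) := by
    simp only [hg, Polynomial.derivative_sub, Polynomial.derivative_add,
      Polynomial.derivative_mul, Polynomial.derivative_X_pow, Polynomial.derivative_C,
      Polynomial.derivative_X, Polynomial.derivative_pow, mul_zero, add_zero, zero_mul,
      mul_one]
    rw [show m + 1 - 1 = m from rfl, show m + 2 - 1 = m + 1 from rfl]
    rw [hq0R, hm1R]
    simp only [map_neg, map_one, map_zero]
    simp only [← Polynomial.C_pow, ← Polynomial.C_mul, Polynomial.derivative_C, sub_zero]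
    ring
  -- the image of f under e
  have hef : e (X 0 ^ (m + 2) * X 1 - X 0 * X 1 ^ (m + 2) + X 0 ^ ((m + 2) + 1))
      = Polynomial.X * g := by
    have h1 : (X 1 : MvPolynomial (Fin 2) k) = X (Fin.succ 0) := rfl
    simp only [map_add, map_sub, map_mul, map_pow, h1, he, finSuccEquiv_X_zero,
      finSuccEquiv_X_succ, hg, hy]
    ring
  -- squarefreeness of X * g
  have hsf : Squarefree (Polynomial.X * g) := by
    rw [squarefree_iff_irreducible_sq_not_dvd_of_ne_zero
      (mul_ne_zero Polynomial.X_ne_zero hg0)]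
    intro p hp hsq
    have hp' : Prime p := (UniqueFactorizationMonoid.irreducible_iff_prime).mp hp
    by_cases hpX : p ∣ Polynomial.X
    · have ha : Associated p Polynomial.X :=
        hp.associated_of_dvd Polynomial.prime_X.irreducible hpX
      have hXX : Polynomial.X * Polynomial.X ∣ Polynomial.X * g :=
        ((Associated.mul_mul ha ha).symm.dvd).trans hsq
      exact hXg ((mul_dvd_mul_iff_left (Polynomial.X_ne_zero (R := R))).mp hXX)
    · have hpg : p ∣ g :=
        (hp'.dvd_or_dvd ((dvd_mul_right p p).trans hsq)).resolve_left hpX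
      obtain ⟨g1, hg1⟩ := hpg
      have hsq' : p * p ∣ p * (Polynomial.X * g1) := by
        rw [show p * (Polynomial.X * g1) = Polynomial.X * (p * g1) by ring, ← hg1]
        exact hsq
      have hpg1 : p ∣ g1 :=
        (hp'.dvd_or_dvd ((mul_dvd_mul_iff_left hp'.ne_zero).mp hsq')).resolve_left hpX
      have hsqg : p * p ∣ g := by rw [hg1]; exact mul_dvd_mul_left p hpg1
      have hder : p ∣ Polynomial.derivative g := by
        obtain ⟨c, hc⟩ := hsqg
        rw [hc, Polynomial.derivative_mul, Polynomial.derivative_mul]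
        exact dvd_add (((dvd_mul_left p _).add (dvd_mul_right p _)).mul_right c)
          ((dvd_mul_right p p).mul_right _)
      rw [hd] at hder
      replace hder : p ∣ Polynomial.X ^ m * Polynomial.C y := by convert hder.mul_right (-1) using 1; ring
      have hpC : p ∣ Polynomial.C y :=
        (hp'.dvd_or_dvd hder).resolve_left (fun h => hpX (hp'.dvd_of_dvd_pow h))
      have hdeg : p.degree ≤ 0 := by
        have := Polynomial.degree_le_of_dvd hpC (Polynomial.C_ne_zero.mpr hy0)
        simpa [Polynomial.degree_C hy0] using this
      have hpc : p = Polynomial.C (p.coeff 0) := Polynomial.eq_C_of_degree_le_zero hdeg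
      have hr : p.coeff 0 ∣ g.coeff (m + 2) := by
        refine (Polynomial.C_dvd_iff_dvd_coeff _ _).mp ?_ (m + 2)
        rw [← hpc]; exact hg1 ▸ dvd_mul_right p g1
      have hco : g.coeff (m + 2) = 1 := by
        simp only [hg, Polynomial.coeff_sub, Polynomial.coeff_add, ← Polynomial.C_pow,
          Polynomial.coeff_mul_C, Polynomial.coeff_X_pow, Polynomial.coeff_C]
        simp
      rw [hco] at hr
      exact hp.not_isUnit (hpc ▸ Polynomial.isUnit_C.mpr (isUnit_of_dvd_one hr))
  -- transfer squarefreeness back along e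
  have hsf' : Squarefree
      (X 0 ^ (m + 2) * X 1 - X 0 * X 1 ^ (m + 2) + X 0 ^ ((m + 2) + 1)
        : MvPolynomial (Fin 2) k) := by
    intro d hd'
    have hu : IsUnit (e d) := by
      refine hsf (e d) ?_
      rw [← hef, ← map_mul]
      exact map_dvd e hd'
    have := hu.map e.symm
    simpa using this
  exact hsf'.isRadical
end

section
/- Let q be a prime power, let k be a field containing the finite field F_q, and let f(X_0, X_1) = X_0^q X_1 − X_0 X_1^q + X_0^{q+1} ∈ k[X_0, X_1]. Then the ideal ⟨f⟩ + Γ*_q(k) = ⟨f, X_0^q X_1 − X_0 X_1^q⟩ of k[X_0, X_1] is not a radical ideal: it contains X_0^{q+1} but does not contain X_0. -/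
open MvPolynomial

/-- For `f(X_0, X_1) = X_0^q X_1 - X_0 X_1^q + X_0^{q+1} ∈ k[X_0, X_1]`, the ideal
`⟨f⟩ + Γ*_q(k) = ⟨f, X_0^q X_1 - X_0 X_1^q⟩` contains `X_0^{q+1}` but not `X_0`,
and hence is not a radical ideal. -/
theorem ideal_add_fermat_not_radical
    (q : ℕ) (hq : IsPrimePow q) (k : Type*) [Field k]
    (Fq : Subfield k) (hcard : Nat.card Fq = q) :
    (X 0 ^ (q + 1) : MvPolynomial (Fin 2) k) ∈
      Ideal.span {(X 0 ^ q * X 1 - X 0 * X 1 ^ q + X 0 ^ (q + 1) :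
          MvPolynomial (Fin 2) k),
        X 0 ^ q * X 1 - X 0 * X 1 ^ q} ∧
    (X 0 : MvPolynomial (Fin 2) k) ∉
      Ideal.span {(X 0 ^ q * X 1 - X 0 * X 1 ^ q + X 0 ^ (q + 1) :
          MvPolynomial (Fin 2) k),
        X 0 ^ q * X 1 - X 0 * X 1 ^ q} ∧
    ¬ (Ideal.span {(X 0 ^ q * X 1 - X 0 * X 1 ^ q + X 0 ^ (q + 1) :
          MvPolynomial (Fin 2) k),
        X 0 ^ q * X 1 - X 0 * X 1 ^ q}).IsRadical := by
  have hq2 : 2 ≤ q := hq.two_le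
  have hmem : (X 0 ^ (q + 1) : MvPolynomial (Fin 2) k) ∈
      Ideal.span {(X 0 ^ q * X 1 - X 0 * X 1 ^ q + X 0 ^ (q + 1) :
          MvPolynomial (Fin 2) k),
        X 0 ^ q * X 1 - X 0 * X 1 ^ q} := by
    rw [Ideal.mem_span_pair]
    exact ⟨1, -1, by ring⟩
  have hnot : (X 0 : MvPolynomial (Fin 2) k) ∉
      Ideal.span {(X 0 ^ q * X 1 - X 0 * X 1 ^ q + X 0 ^ (q + 1) :
          MvPolynomial (Fin 2) k),
        X 0 ^ q * X 1 - X 0 * X 1 ^ q} := by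
    intro h
    rw [Ideal.mem_span_pair] at h
    obtain ⟨a, b, hab⟩ := h
    have heps : (DualNumber.eps : DualNumber k) ^ (q + 1) = 0 := by
      rw [show q + 1 = 2 + (q - 1) by omega, pow_add, sq, DualNumber.eps_mul_eps,
        zero_mul]
    have := congrArg (aeval ![(DualNumber.eps : DualNumber k), 0]) hab
    simp [zero_pow (by omega : q ≠ 0), heps] at this
    have hne : (DualNumber.eps : DualNumber k) ≠ 0 := fun h => by
      simpa using congrArg TrivSqZeroExt.snd h
    exact hne this.symm
  refine ⟨hmem, hnot, fun hrad => hnot (hrad ⟨q + 1, hmem⟩)⟩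
end
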